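/- arXiv:2201.03975 — 5 statements merged into one kernel-verified Lean document; each statement's English description precedes it below -/
import Mathlib

section
/- Let a, b > 0. The function L is monotone: L(N) ≥ L(N−1) for every integer N ≥ 2, and the inequality is strict, L(N) > L(N−1), for every integer N ≥ 4. -/
open Set

/-- Interior of the tile `T(k,l)` of the `a×b` grid. -/
noncomputable def tileInt (a b : ℝ) (k l : ℤ) : Set (ℝ × ℝ) :=
  Set.Ioo ((k : ℝ) * a) (((k : ℝ) + 1) * a) ×ˢ Set.Ioo ((l : ℝ) * b) (((l : ℝ) + 1) * b)

/-- Number of tiles of the `a×b` grid visited by the closed segment with endpoints `p`, `q`. -/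
noncomputable def visitCount (a b : ℝ) (p q : ℝ × ℝ) : ℕ :=
  Set.ncard {kl : ℤ × ℤ | (segment ℝ p q ∩ tileInt a b kl.1 kl.2).Nonempty}

/-- Normalized width of the discrete bounding rectangle of the segment with endpoints `p`, `q`. -/
noncomputable def normWidth (a : ℝ) (p q : ℝ × ℝ) : ℤ :=
  ⌈max p.1 q.1 / a⌉ - ⌊min p.1 q.1 / a⌋

/-- Normalized height of the discrete bounding rectangle of the segment with endpoints `p`, `q`. -/
noncomputable def normHeight (b : ℝ) (p q : ℝ × ℝ) : ℤ :=
  ⌈max p.2 q.2 / b⌉ - ⌊min p.2 q.2 / b⌋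

/-- Euclidean length of the segment with endpoints `p`, `q`. -/
noncomputable def segLen (p q : ℝ × ℝ) : ℝ :=
  Real.sqrt ((p.1 - q.1) ^ 2 + (p.2 - q.2) ^ 2)

/-- `maxTiles a b ℓ` : maximum number of tiles of the `a×b` grid visited by a segment of length `ℓ`. -/
noncomputable def maxTiles (a b ℓ : ℝ) : ℕ :=
  sSup {n : ℕ | ∃ p q : ℝ × ℝ, segLen p q = ℓ ∧ visitCount a b p q = n}

/-- `infLen a b N` : infimum of lengths of segments visiting at least `N` tiles of the `a×b` grid. -/
noncomputable def infLen (a b : ℝ) (N : ℕ) : ℝ :=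
  sInf {ℓ : ℝ | 0 < ℓ ∧ ∃ p q : ℝ × ℝ, segLen p q = ℓ ∧ N ≤ visitCount a b p q}

/-- `minIntLen N` : minimum positive integer length of a segment visiting at least `N` tiles
of the unit square grid. -/
noncomputable def minIntLen (N : ℕ) : ℕ :=
  sInf {L : ℕ | 1 ≤ L ∧ ∃ p q : ℝ × ℝ, segLen p q = (L : ℝ) ∧ N ≤ visitCount 1 1 p q}

namespace GridAux

variable {a b : ℝ}


variable {a b : ℝ}

lemma mem_tile_iff {x : ℝ × ℝ} {k l : ℤ} :
    x ∈ tileInt a b k l ↔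
      ((k:ℝ) * a < x.1 ∧ x.1 < ((k:ℝ)+1) * a) ∧ ((l:ℝ) * b < x.2 ∧ x.2 < ((l:ℝ)+1) * b) := by
  simp [tileInt, Set.mem_prod, Set.mem_Ioo]

lemma seg_param {p q x : ℝ × ℝ} (hx : x ∈ segment ℝ p q) :
    ∃ t : ℝ, 0 ≤ t ∧ t ≤ 1 ∧ x.1 = p.1 + t * (q.1 - p.1) ∧ x.2 = p.2 + t * (q.2 - p.2) := by
  rcases hx with ⟨c, d, hc, hd, hcd, rfl⟩
  have hc1 : c = 1 - d := by linarith
  subst hc1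
  exact ⟨d, hd, by linarith, by simp [Prod.fst_add, Prod.smul_fst, smul_eq_mul]; ring,
    by simp [Prod.snd_add, Prod.smul_snd, smul_eq_mul]; ring⟩

lemma interp_bounds {u v t : ℝ} (h0 : 0 ≤ t) (h1 : t ≤ 1) :
    min u v ≤ u + t * (v - u) ∧ u + t * (v - u) ≤ max u v := by
  rcases le_total u v with h | h
  · rw [min_eq_left h, max_eq_right h]; constructor <;> nlinarith
  · rw [min_eq_right h, max_eq_left h]; constructor <;> nlinarith

lemma seg_bounds {p q x : ℝ × ℝ} (hx : x ∈ segment ℝ p q) :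
    min p.1 q.1 ≤ x.1 ∧ x.1 ≤ max p.1 q.1 ∧ min p.2 q.2 ≤ x.2 ∧ x.2 ≤ max p.2 q.2 := by
  obtain ⟨t, h0, h1, e1, e2⟩ := seg_param hx
  rw [e1, e2]
  obtain ⟨a1, a2⟩ := interp_bounds (u := p.1) (v := q.1) h0 h1
  obtain ⟨b1, b2⟩ := interp_bounds (u := p.2) (v := q.2) h0 h1
  exact ⟨a1, a2, b1, b2⟩

lemma visit_bounds (ha : 0 < a) (hb : 0 < b) {p q : ℝ × ℝ} {k l : ℤ}
    (h : (segment ℝ p q ∩ tileInt a b k l).Nonempty) :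
    ⌊min p.1 q.1 / a⌋ ≤ k ∧ k ≤ ⌈max p.1 q.1 / a⌉ - 1 ∧
    ⌊min p.2 q.2 / b⌋ ≤ l ∧ l ≤ ⌈max p.2 q.2 / b⌉ - 1 := by
  obtain ⟨x, hxs, hxt⟩ := h
  obtain ⟨h1, h2, h3, h4⟩ := seg_bounds hxs
  rw [mem_tile_iff] at hxt
  obtain ⟨⟨hk1, hk2⟩, hl1, hl2⟩ := hxt
  have f1 : ⌊min p.1 q.1 / a⌋ < k + 1 := by
    rw [Int.floor_lt]; push_cast; rw [div_lt_iff₀ ha]; nlinarith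
  have f2 : k < ⌈max p.1 q.1 / a⌉ := by
    rw [Int.lt_ceil]; rw [lt_div_iff₀ ha]; nlinarith
  have f3 : ⌊min p.2 q.2 / b⌋ < l + 1 := by
    rw [Int.floor_lt]; push_cast; rw [div_lt_iff₀ hb]; nlinarith
  have f4 : l < ⌈max p.2 q.2 / b⌉ := by
    rw [Int.lt_ceil]; rw [lt_div_iff₀ hb]; nlinarith
  omega

lemma visit_finite (ha : 0 < a) (hb : 0 < b) (p q : ℝ × ℝ) :
    {kl : ℤ × ℤ | (segment ℝ p q ∩ tileInt a b kl.1 kl.2).Nonempty}.Finite := by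
  apply Set.Finite.subset (Set.finite_Icc (⌊min p.1 q.1 / a⌋, ⌊min p.2 q.2 / b⌋)
    (⌈max p.1 q.1 / a⌉ - 1, ⌈max p.2 q.2 / b⌉ - 1))
  rintro ⟨k, l⟩ h
  obtain ⟨h1, h2, h3, h4⟩ := visit_bounds ha hb h
  simp only [Set.mem_Icc, Prod.mk_le_mk]
  exact ⟨⟨h1, h3⟩, ⟨h2, h4⟩⟩


lemma seg_mono_up {p q : ℝ × ℝ} (h1 : p.1 ≤ q.1) (h2 : p.2 ≤ q.2) :
    ∀ x ∈ segment ℝ p q, ∀ y ∈ segment ℝ p q, x.1 < y.1 → x.2 ≤ y.2 := by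
  intro x hx y hy hxy
  obtain ⟨s, hs0, hs1, ex1, ex2⟩ := seg_param hx
  obtain ⟨t, ht0, ht1, ey1, ey2⟩ := seg_param hy
  have hst : s ≤ t := by
    by_contra hc
    push_neg at hc
    rw [ex1, ey1] at hxy
    nlinarith
  rw [ex2, ey2]
  nlinarith

lemma seg_mono_down {p q : ℝ × ℝ} (h1 : p.1 ≤ q.1) (h2 : q.2 ≤ p.2) :
    ∀ x ∈ segment ℝ p q, ∀ y ∈ segment ℝ p q, x.1 < y.1 → y.2 ≤ x.2 := by
  intro x hx y hy hxy
  obtain ⟨s, hs0, hs1, ex1, ex2⟩ := seg_param hx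
  obtain ⟨t, ht0, ht1, ey1, ey2⟩ := seg_param hy
  have hst : s ≤ t := by
    by_contra hc
    push_neg at hc
    rw [ex1, ey1] at hxy
    nlinarith
  rw [ex2, ey2]
  nlinarith

lemma count_le_core (ha : 0 < a) (hb : 0 < b) (p q : ℝ × ℝ) (e : ℤ) (he : e = 1 ∨ e = -1)
    (hmono : ∀ x ∈ segment ℝ p q, ∀ y ∈ segment ℝ p q, x.1 < y.1 →
      (e:ℝ) * x.2 ≤ (e:ℝ) * y.2) :
    visitCount a b p q ≤ (normWidth a p q + normHeight b p q - 1).toNat := by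
  classical
  set kmin := ⌊min p.1 q.1 / a⌋ with hkmin
  set kmax := ⌈max p.1 q.1 / a⌉ - 1 with hkmax
  set lmin := ⌊min p.2 q.2 / b⌋ with hlmin
  set lmax := ⌈max p.2 q.2 / b⌉ - 1 with hlmax
  set V := {kl : ℤ × ℤ | (segment ℝ p q ∩ tileInt a b kl.1 kl.2).Nonempty} with hV
  have noCross : ∀ k l k' l' : ℤ, (k, l) ∈ V → (k', l') ∈ V → k < k' →
      e * l' + 1 ≤ e * l → False := by
    rintro k l k' l' ⟨x, hxs, hxt⟩ ⟨y, hys, hyt⟩ hkk hll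
    rw [mem_tile_iff] at hxt hyt
    have hxy : x.1 < y.1 := by
      have hc : ((k:ℝ) + 1) ≤ (k':ℝ) := by exact_mod_cast hkk
      have : ((k:ℝ) + 1) * a ≤ (k':ℝ) * a := by nlinarith
      nlinarith [hxt.1.2, hyt.1.1]
    have hm := hmono x hxs y hys hxy
    rcases he with rfl | rfl
    · have h5 : l' + 1 ≤ l := by omega
      have h6 : ((l':ℝ) + 1) ≤ (l:ℝ) := by exact_mod_cast h5
      have : ((l':ℝ) + 1) * b ≤ (l:ℝ) * b := by nlinarith
      push_cast at hm
      nlinarith [hxt.2.1, hyt.2.2]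
    · have h5 : l + 1 ≤ l' := by omega
      have h6 : ((l:ℝ) + 1) ≤ (l':ℝ) := by exact_mod_cast h5
      have : ((l:ℝ) + 1) * b ≤ (l':ℝ) * b := by nlinarith
      push_cast at hm
      nlinarith [hxt.2.2, hyt.2.1]
  set L0 : ℤ := if e = 1 then lmin else -lmax with hL0
  set L1 : ℤ := if e = 1 then lmax else -lmin with hL1
  have hmaps : ∀ kl ∈ V, kl.1 + e * kl.2 ∈
      ((Finset.Icc (kmin + L0) (kmax + L1) : Finset ℤ) : Set ℤ) := by
    rintro ⟨k, l⟩ hkl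
    obtain ⟨h1, h2, h3, h4⟩ := visit_bounds ha hb hkl
    simp only [Finset.coe_Icc, Set.mem_Icc]
    rcases he with rfl | rfl <;>
      simp only [hL0, hL1, if_pos rfl, one_mul, neg_one_mul, reduceIte] <;> omega
  have hinj : Set.InjOn (fun kl : ℤ × ℤ => kl.1 + e * kl.2) V := by
    rintro ⟨k, l⟩ hkl ⟨k', l'⟩ hkl' hf
    simp only at hf
    rcases lt_trichotomy k k' with h | h | h
    · exact absurd (noCross k l k' l' hkl hkl' h (by rcases he with rfl|rfl <;> omega)) (by simp)
    · have : l = l' := by rcases he with rfl|rfl <;> omega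
      simp [h, this]
    · exact absurd (noCross k' l' k l hkl' hkl h (by rcases he with rfl|rfl <;> omega)) (by simp)
  have hcard : (Finset.Icc (kmin + L0) (kmax + L1)).card
      = (normWidth a p q + normHeight b p q - 1).toNat := by
    rw [Int.card_Icc]
    congr 1
    have hW : normWidth a p q = (kmax + 1) - kmin := by
      rw [normWidth, hkmax, hkmin]; ring
    have hH : normHeight b p q = (lmax + 1) - lmin := by
      rw [normHeight, hlmax, hlmin]; ring
    rcases he with rfl|rfl <;>
      simp only [hL0, hL1, reduceIte] <;> omega
  have hle := Set.ncard_le_ncard_of_injOn _ hmaps hinj (Finset.finite_toSet _)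
  rw [Set.ncard_coe_finset, hcard] at hle
  exact hle

lemma visit_symm (p q : ℝ × ℝ) : visitCount a b q p = visitCount a b p q := by
  unfold visitCount; rw [segment_symm]

lemma count_le (ha : 0 < a) (hb : 0 < b) (p q : ℝ × ℝ) :
    visitCount a b p q ≤ (normWidth a p q + normHeight b p q - 1).toNat := by
  have main : ∀ p q : ℝ × ℝ, p.1 ≤ q.1 →
      visitCount a b p q ≤ (normWidth a p q + normHeight b p q - 1).toNat := by
    intro p q h1
    rcases le_total p.2 q.2 with h2 | h2
    · apply count_le_core ha hb p q 1 (Or.inl rfl)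
      intro x hx y hy hxy
      push_cast
      simpa using seg_mono_up h1 h2 x hx y hy hxy
    · apply count_le_core ha hb p q (-1) (Or.inr rfl)
      intro x hx y hy hxy
      push_cast
      have := seg_mono_down h1 h2 x hx y hy hxy
      linarith
  rcases le_total p.1 q.1 with h1 | h1
  · exact main p q h1
  · have hW : normWidth a q p = normWidth a p q := by
      rw [normWidth, normWidth, max_comm, min_comm]
    have hH : normHeight b q p = normHeight b p q := by
      rw [normHeight, normHeight, max_comm, min_comm]
    have := main q p h1
    rwa [visit_symm, hW, hH] at this


lemma widthLB (ha : 0 < a) (p q : ℝ × ℝ) :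
    ((normWidth a p q - 2).toNat : ℝ) * a ≤ |p.1 - q.1| := by
  have habs : |p.1 - q.1| = max p.1 q.1 - min p.1 q.1 := by
    rw [abs_sub_comm]; exact (max_sub_min_eq_abs p.1 q.1).symm
  have h1 : (⌈max p.1 q.1 / a⌉ : ℝ) < max p.1 q.1 / a + 1 := Int.ceil_lt_add_one _
  have h2 : min p.1 q.1 / a - 1 < (⌊min p.1 q.1 / a⌋ : ℝ) := Int.sub_one_lt_floor _
  rcases le_or_gt (normWidth a p q) 2 with h | h
  · rw [Int.toNat_of_nonpos (by omega)]
    rw [habs]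
    push_cast
    nlinarith [min_le_max (a := p.1) (b := q.1)]
  · have hct : ((normWidth a p q - 2).toNat : ℝ) = (normWidth a p q : ℝ) - 2 := by
      have h0 := Int.toNat_of_nonneg (show (0:ℤ) ≤ normWidth a p q - 2 by omega)
      exact_mod_cast congrArg (Int.cast : ℤ → ℝ) h0
    rw [hct, habs]
    have hcast : ((normWidth a p q : ℤ) : ℝ) = (⌈max p.1 q.1 / a⌉ : ℝ) - (⌊min p.1 q.1 / a⌋ : ℝ) := by
      rw [normWidth]; push_cast; ring
    rw [hcast]
    have h3 : (⌈max p.1 q.1 / a⌉ : ℝ) - (⌊min p.1 q.1 / a⌋ : ℝ) - 2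
        < max p.1 q.1 / a - min p.1 q.1 / a := by linarith
    have h4 : ((⌈max p.1 q.1 / a⌉ : ℝ) - (⌊min p.1 q.1 / a⌋ : ℝ) - 2) * a
        < max p.1 q.1 - min p.1 q.1 := by
      have := mul_lt_mul_of_pos_right h3 ha
      calc ((⌈max p.1 q.1 / a⌉ : ℝ) - (⌊min p.1 q.1 / a⌋ : ℝ) - 2) * a
          < (max p.1 q.1 / a - min p.1 q.1 / a) * a := this
        _ = max p.1 q.1 - min p.1 q.1 := by field_simp
    linarith


lemma heightLB (hb : 0 < b) (p q : ℝ × ℝ) :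
    ((normHeight b p q - 2).toNat : ℝ) * b ≤ |p.2 - q.2| := by
  have habs : |p.2 - q.2| = max p.2 q.2 - min p.2 q.2 := by
    rw [abs_sub_comm]; exact (max_sub_min_eq_abs p.2 q.2).symm
  have h1 : (⌈max p.2 q.2 / b⌉ : ℝ) < max p.2 q.2 / b + 1 := Int.ceil_lt_add_one _
  have h2 : min p.2 q.2 / b - 1 < (⌊min p.2 q.2 / b⌋ : ℝ) := Int.sub_one_lt_floor _
  rcases le_or_gt (normHeight b p q) 2 with h | h
  · rw [Int.toNat_of_nonpos (by omega)]
    rw [habs]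
    push_cast
    nlinarith [min_le_max (a := p.2) (b := q.2)]
  · have hct : ((normHeight b p q - 2).toNat : ℝ) = (normHeight b p q : ℝ) - 2 := by
      have h0 := Int.toNat_of_nonneg (show (0:ℤ) ≤ normHeight b p q - 2 by omega)
      exact_mod_cast congrArg (Int.cast : ℤ → ℝ) h0
    rw [hct, habs]
    have hcast : ((normHeight b p q : ℤ) : ℝ) = (⌈max p.2 q.2 / b⌉ : ℝ) - (⌊min p.2 q.2 / b⌋ : ℝ) := by
      rw [normHeight]; push_cast; ring
    rw [hcast]
    have h3 : (⌈max p.2 q.2 / b⌉ : ℝ) - (⌊min p.2 q.2 / b⌋ : ℝ) - 2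
        < max p.2 q.2 / b - min p.2 q.2 / b := by linarith
    have h4 : ((⌈max p.2 q.2 / b⌉ : ℝ) - (⌊min p.2 q.2 / b⌋ : ℝ) - 2) * b
        < max p.2 q.2 - min p.2 q.2 := by
      have := mul_lt_mul_of_pos_right h3 hb
      calc ((⌈max p.2 q.2 / b⌉ : ℝ) - (⌊min p.2 q.2 / b⌋ : ℝ) - 2) * b
          < (max p.2 q.2 / b - min p.2 q.2 / b) * b := this
        _ = max p.2 q.2 - min p.2 q.2 := by field_simp
    linarith

lemma lenLB {p q : ℝ × ℝ} {c d : ℝ} (hc : 0 ≤ c) (hd : 0 ≤ d)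
    (h1 : c ≤ |p.1 - q.1|) (h2 : d ≤ |p.2 - q.2|) :
    Real.sqrt (c^2 + d^2) ≤ segLen p q := by
  rw [segLen]
  apply Real.sqrt_le_sqrt
  have e1 : c^2 ≤ (p.1 - q.1)^2 := by
    rw [← sq_abs (p.1 - q.1)]; nlinarith [abs_nonneg (p.1 - q.1)]
  have e2 : d^2 ≤ (p.2 - q.2)^2 := by
    rw [← sq_abs (p.2 - q.2)]; nlinarith [abs_nonneg (p.2 - q.2)]
  linarith

noncomputable def hval (a b : ℝ) (m : ℕ) : ℝ :=
  (Finset.range (m+1)).inf' (by simp) (fun u => Real.sqrt (((u:ℝ)*a)^2 + (((m - u : ℕ):ℝ)*b)^2))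

lemma hval_le {m u : ℕ} (hu : u ≤ m) :
    hval a b m ≤ Real.sqrt (((u:ℝ)*a)^2 + (((m - u : ℕ):ℝ)*b)^2) :=
  Finset.inf'_le _ (by simp; omega)

lemma hval_nonneg (m : ℕ) : 0 ≤ hval a b m :=
  Finset.le_inf' _ _ (fun _ _ => Real.sqrt_nonneg _)

lemma hval_lt (ha : 0 < a) (hb : 0 < b) (m : ℕ) : hval a b m < hval a b (m+1) := by
  have hex : ∃ u ∈ Finset.range (m+1+1), hval a b (m+1)
      = Real.sqrt (((u:ℝ)*a)^2 + (((m+1-u : ℕ):ℝ)*b)^2) := by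
    unfold hval
    exact Finset.exists_mem_eq_inf' _ _
  obtain ⟨u, hu, heq⟩ := hex
  have hu' : u ≤ m + 1 := by have := Finset.mem_range.mp hu; omega
  rw [heq]
  rcases Nat.eq_zero_or_pos u with rfl | hupos
  · have hle := hval_le (a := a) (b := b) (m := m) (u := 0) (Nat.zero_le m)
    have hlt : Real.sqrt ((((0:ℕ):ℝ)*a)^2 + (((m - 0 : ℕ):ℝ)*b)^2)
        < Real.sqrt ((((0:ℕ):ℝ)*a)^2 + (((m+1-0 : ℕ):ℝ)*b)^2) := by
      apply Real.sqrt_lt_sqrt (by positivity)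
      simp only [Nat.sub_zero, Nat.add_sub_cancel]
      push_cast
      nlinarith [Nat.cast_nonneg (α := ℝ) m, mul_pos hb hb]
    exact lt_of_le_of_lt hle hlt
  · have hle := hval_le (a := a) (b := b) (m := m) (u := u - 1) (by omega)
    have hcast1 : ((u - 1 : ℕ) : ℝ) = (u:ℝ) - 1 := by
      push_cast [Nat.cast_sub hupos]; ring
    have hcast2 : (m - (u - 1) : ℕ) = (m + 1 - u : ℕ) := by omega
    rw [hcast1, hcast2] at hle
    have hlt : Real.sqrt ((((u:ℝ) - 1)*a)^2 + (((m+1-u : ℕ):ℝ)*b)^2)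
        < Real.sqrt (((u:ℝ)*a)^2 + (((m+1-u : ℕ):ℝ)*b)^2) := by
      apply Real.sqrt_lt_sqrt (by positivity)
      have hu1 : (1:ℝ) ≤ (u:ℝ) := by exact_mod_cast hupos
      nlinarith [mul_pos ha ha]
    exact lt_of_le_of_lt hle hlt

lemma sqrt_bound {x y d e : ℝ} (hx : 0 ≤ x) (hy : 0 ≤ y) (hd : 0 ≤ d) (he : 0 ≤ e) :
    Real.sqrt ((x+d)^2 + (y+e)^2) ≤ Real.sqrt (x^2+y^2) + (d+e) := by
  have hs := Real.sq_sqrt (by positivity : (0:ℝ) ≤ x^2+y^2)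
  have hx' : x ≤ Real.sqrt (x^2+y^2) := by
    have := Real.sqrt_le_sqrt (show x^2 ≤ x^2+y^2 by nlinarith)
    rwa [Real.sqrt_sq hx] at this
  have hy' : y ≤ Real.sqrt (x^2+y^2) := by
    have := Real.sqrt_le_sqrt (show y^2 ≤ x^2+y^2 by nlinarith)
    rwa [Real.sqrt_sq hy] at this
  have hnn := Real.sqrt_nonneg (x^2+y^2)
  calc Real.sqrt ((x+d)^2 + (y+e)^2)
      ≤ Real.sqrt ((Real.sqrt (x^2+y^2) + (d+e))^2) := by
        apply Real.sqrt_le_sqrt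
        nlinarith
    _ = Real.sqrt (x^2+y^2) + (d+e) := Real.sqrt_sq (by positivity)

lemma pick_point (T : Finset ℝ) (hT : ∀ x ∈ T, x ∈ Set.Ioo (0:ℝ) 1) :
    ∀ r : ℕ, r ≤ T.card →
      ∃ t : ℝ, t ∈ Set.Ioo (0:ℝ) 1 ∧ t ∉ T ∧ (T.filter (fun x => x < t)).card = r := by
  classical
  intro r
  induction r with
  | zero =>
    intro _
    by_cases h : T.Nonempty
    · have h1 := (hT _ (T.min'_mem h)).1
      have h2 := (hT _ (T.min'_mem h)).2
      refine ⟨T.min' h / 2, ⟨by linarith, by linarith⟩, ?_, ?_⟩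
      · intro hmem
        have := T.min'_le _ hmem
        linarith
      · rw [Finset.card_eq_zero, Finset.filter_eq_empty_iff]
        intro x hx
        have := T.min'_le x hx
        intro hlt
        linarith
    · rw [Finset.not_nonempty_iff_eq_empty] at h
      subst h
      exact ⟨1/2, by norm_num, by simp, by simp⟩
  | succ r ih =>
    intro hr
    obtain ⟨t, ht, htT, hc⟩ := ih (by omega)
    have hSne : (T.filter (fun x => t < x)).Nonempty := by
      by_contra hS
      rw [Finset.not_nonempty_iff_eq_empty, Finset.filter_eq_empty_iff] at hS
      have hfil : T.filter (fun x => x < t) = T := by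
        rw [Finset.filter_eq_self]
        intro x hx
        rcases lt_trichotomy x t with h|h|h
        · exact h
        · exact absurd (h ▸ hx) htT
        · exact absurd h (hS hx)
      rw [hfil] at hc
      omega
    set m := (T.filter (fun x => t < x)).min' hSne with hmdef
    have hmS := Finset.min'_mem _ hSne
    have hmT : m ∈ T := Finset.mem_of_mem_filter _ hmS
    have hmt : t < m := (Finset.mem_filter.mp hmS).2
    have hm0 : 0 < m := (hT _ hmT).1
    have hm1 : m < 1 := (hT _ hmT).2
    set S' := T.filter (fun x => m < x) with hS'def
    have key : ∃ t', m < t' ∧ t' < 1 ∧ ∀ x ∈ S', t' < x := by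
      by_cases h : S'.Nonempty
      · have hmm : m < S'.min' h := (Finset.mem_filter.mp (Finset.min'_mem _ h)).2
        have hlt1 : S'.min' h < 1 := (hT _ (Finset.mem_of_mem_filter _ (Finset.min'_mem _ h))).2
        refine ⟨(m + S'.min' h)/2, by linarith, by linarith, ?_⟩
        intro x hx
        have := Finset.min'_le _ _ hx
        linarith
      · refine ⟨(m + 1)/2, by linarith, by linarith, ?_⟩
        intro x hx
        exact absurd ⟨x, hx⟩ h
    obtain ⟨t', hmt', ht'1, hub⟩ := key
    refine ⟨t', ⟨by linarith, ht'1⟩, ?_, ?_⟩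
    · intro hmem
      rcases le_or_gt t' m with h|h
      · linarith
      · have : t' ∈ S' := Finset.mem_filter.mpr ⟨hmem, h⟩
        exact absurd (hub t' this) (lt_irrefl t')
    · have hfil : T.filter (fun x => x < t') = insert m (T.filter (fun x => x < t)) := by
        ext x
        simp only [Finset.mem_filter, Finset.mem_insert]
        constructor
        · rintro ⟨hxT, hxt'⟩
          rcases le_or_gt x m with hxm|hxm
          · rcases eq_or_lt_of_le hxm with h|h
            · exact Or.inl h
            · right
              refine ⟨hxT, ?_⟩
              by_contra hge
              push_neg at hge
              have hne : t ≠ x := fun hh => htT (hh ▸ hxT)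
              have : x ∈ T.filter (fun y => t < y) :=
                Finset.mem_filter.mpr ⟨hxT, lt_of_le_of_ne hge hne⟩
              have := Finset.min'_le _ _ this
              rw [← hmdef] at this
              linarith
          · have : x ∈ S' := Finset.mem_filter.mpr ⟨hxT, hxm⟩
            exact absurd (hub x this) (by linarith)
        · rintro (rfl|⟨hxT, hxt⟩)
          · exact ⟨hmT, hmt'⟩
          · exact ⟨hxT, by linarith⟩
      rw [hfil, Finset.card_insert_of_notMem, hc]
      intro hmem
      have := (Finset.mem_filter.mp hmem).2
      linarith

lemma crossing (δ D : ℝ) (n : ℕ) (hδ0 : 0 < δ) (hδ1 : δ < 1) (hD0 : 0 < D)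
    (hD2 : D ≤ (n:ℝ) + 1 + δ)
    (t : ℝ) (ht0 : 0 < t) (ht1 : t < 1) (hne : ∀ j ≤ n, ((j:ℝ) + δ)/D ≠ t) :
    ((((Finset.range (n+1)).filter (fun j : ℕ => ((j:ℝ)+δ)/D < t)).card : ℝ) - 1 < -δ + t*D ∧
     -δ + t*D < (((Finset.range (n+1)).filter (fun j : ℕ => ((j:ℝ)+δ)/D < t)).card : ℝ)) := by
  classical
  set F := (Finset.range (n+1)).filter (fun j : ℕ => ((j:ℝ)+δ)/D < t) with hF
  set c := F.card with hc
  have hdown : ∀ j k : ℕ, j ≤ k → k ∈ F → j ∈ F := by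
    intro j k hjk hk
    rw [hF, Finset.mem_filter, Finset.mem_range] at hk ⊢
    refine ⟨by omega, lt_of_le_of_lt ?_ hk.2⟩
    have : (j:ℝ) ≤ (k:ℝ) := by exact_mod_cast hjk
    gcongr
  have hcle : c ≤ n + 1 := by
    rw [hc, hF]
    exact le_trans (Finset.card_filter_le _ _) (by simp)
  constructor
  · rcases Nat.eq_zero_or_pos c with h0 | hpos
    · rw [h0]
      push_cast
      nlinarith
    · have hex : ∃ j ∈ F, c - 1 ≤ j := by
        by_contra hcon
        push_neg at hcon
        have hsub : F ⊆ Finset.range (c-1) := by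
          intro x hx
          exact Finset.mem_range.mpr (hcon x hx)
        have := Finset.card_le_card hsub
        rw [Finset.card_range] at this
        omega
      obtain ⟨j, hjF, hjc⟩ := hex
      have h1 : ((c - 1 : ℕ):ℝ) + δ ≤ ((j:ℝ) + δ) := by
        have : ((c-1:ℕ):ℝ) ≤ (j:ℝ) := by exact_mod_cast hjc
        linarith
      have h2 : ((j:ℝ)+δ)/D < t := (Finset.mem_filter.mp hjF).2
      have h3 : ((j:ℝ)+δ) < t * D := by
        rw [div_lt_iff₀ hD0] at h2
        linarith
      have h4 : ((c:ℝ) - 1) + δ < t * D := by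
        have hcast : ((c - 1 : ℕ):ℝ) = (c:ℝ) - 1 := by
          push_cast [Nat.cast_sub hpos]; ring
        rw [hcast] at h1
        linarith
      linarith
  · rcases eq_or_lt_of_le hcle with heq | hlt
    · have : -δ + t*D < -δ + D := by nlinarith
      have : -δ + t*D < (n:ℝ) + 1 := by linarith
      rw [heq]
      push_cast
      linarith
    · have hcn : c ≤ n := by omega
      have hcnotF : c ∉ F := by
        intro hmem
        have hsub : Finset.range (c+1) ⊆ F := by
          intro x hx
          exact hdown x c (by exact Nat.lt_succ_iff.mp (Finset.mem_range.mp hx)) hmem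
        have := Finset.card_le_card hsub
        rw [Finset.card_range] at this
        omega
      have h1 : ¬ (((c:ℝ)+δ)/D < t) := by
        intro hlt'
        exact hcnotF (Finset.mem_filter.mpr ⟨Finset.mem_range.mpr (by omega), hlt'⟩)
      have h2 : ((c:ℝ)+δ)/D ≠ t := hne c hcn
      have h3 : t < ((c:ℝ)+δ)/D := lt_of_le_of_ne (not_lt.mp h1) (Ne.symm h2)
      rw [lt_div_iff₀ hD0] at h3
      linarith

set_option maxHeartbeats 1600000 in
lemma construct (ha : 0 < a) (hb : 0 < b) (u v Q : ℕ) (hQ : 1 ≤ Q) :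
    ∃ p q : ℝ × ℝ, 0 < segLen p q ∧
      segLen p q ≤ Real.sqrt (((u:ℝ)*a)^2 + ((v:ℝ)*b)^2) + (a + b)/(Q:ℝ) ∧
      u + v + 3 ≤ visitCount a b p q := by
  classical
  have hQR : (0:ℝ) < (Q:ℝ) := by exact_mod_cast Nat.pos_of_ne_zero (by omega)
  set δ : ℝ := 1/(4*(Q:ℝ)) with hδ
  have hδ0 : 0 < δ := by positivity
  have hQ1 : (1:ℝ) ≤ (Q:ℝ) := by exact_mod_cast hQ
  have hδ4 : 4*δ ≤ 1 := by
    rw [hδ]; rw [mul_one_div, div_le_one (by positivity)]; linarith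
  have hδ1 : δ < 1 := by nlinarith
  set Dx : ℝ := (u:ℝ) + 4*δ with hDx
  set Dy : ℝ := (v:ℝ) + 2*δ with hDy
  have hDx0 : 0 < Dx := by positivity
  have hDy0 : 0 < Dy := by positivity
  set p : ℝ × ℝ := (-(δ*a), -(δ*b)) with hp
  set q : ℝ × ℝ := (((u:ℝ) + 3*δ)*a, ((v:ℝ) + δ)*b) with hq
  set P : ℝ → ℝ × ℝ := fun t => ((-δ + t*Dx)*a, (-δ + t*Dy)*b) with hP
  have hPseg : ∀ t : ℝ, 0 ≤ t → t ≤ 1 → P t ∈ segment ℝ p q := by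
    intro t h0 h1
    refine ⟨1 - t, t, by linarith, h0, by ring, ?_⟩
    show (1-t) • p + t • q = P t
    rw [hp, hq, hP, hDx, hDy]
    simp only [Prod.smul_mk, Prod.mk_add_mk, smul_eq_mul, Prod.mk.injEq]
    constructor <;> ring
  set tj : ℕ → ℝ := fun j => ((j:ℝ) + δ)/Dx with htj
  set si : ℕ → ℝ := fun i => ((i:ℝ) + δ)/Dy with hsi
  -- crossing times are distinct (parity argument)
  have hdisj : ∀ j ≤ u, ∀ i ≤ v, tj j ≠ si i := by
    intro j hj i hi heq
    rw [htj, hsi] at heq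
    simp only at heq
    rw [div_eq_div_iff hDx0.ne' hDy0.ne'] at heq
    have key : ((4*Q*j+1 : ℕ):ℝ) * ((4*Q*v+2 : ℕ):ℝ) = ((4*Q*i+1 : ℕ):ℝ) * ((4*Q*u+4 : ℕ):ℝ) := by
      push_cast
      rw [hDy, hDx, hδ] at heq
      field_simp at heq
      nlinarith [heq]
    have keyN : (4*Q*j+1) * (4*Q*v+2) = (4*Q*i+1) * (4*Q*u+4) := by exact_mod_cast key
    have l1 : (4*Q*j+1)*(4*Q*v+2) = 2*((4*Q*j+1)*(2*Q*v+1)) := by ring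
    have l2 : (4*Q*i+1)*(4*Q*u+4) = 2*(2*((4*Q*i+1)*(Q*u+1))) := by ring
    rw [l1, l2] at keyN
    have keyN2 : (4*Q*j+1)*(2*Q*v+1) = 2*((4*Q*i+1)*(Q*u+1)) :=
      Nat.eq_of_mul_eq_mul_left (by norm_num) keyN
    have hXodd : (4*Q*j+1)*(2*Q*v+1) = 2*(4*(Q*j)*(Q*v) + 2*(Q*j) + Q*v) + 1 := by ring
    rw [hXodd] at keyN2
    omega
  have htj_mono : ∀ j k : ℕ, j < k → tj j < tj k := by
    intro j k h
    rw [htj]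
    simp only
    rw [div_lt_div_iff₀ hDx0 hDx0]
    have : (j:ℝ) < (k:ℝ) := by exact_mod_cast h
    nlinarith
  have hsi_mono : ∀ j k : ℕ, j < k → si j < si k := by
    intro j k h
    rw [hsi]
    simp only
    rw [div_lt_div_iff₀ hDy0 hDy0]
    have : (j:ℝ) < (k:ℝ) := by exact_mod_cast h
    nlinarith
  have htj_inj : Function.Injective tj := by
    intro j k h
    rcases lt_trichotomy j k with hc|hc|hc
    · exact absurd h (ne_of_lt (htj_mono _ _ hc))
    · exact hc
    · exact absurd h.symm (ne_of_lt (htj_mono _ _ hc))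
  have hsi_inj : Function.Injective si := by
    intro j k h
    rcases lt_trichotomy j k with hc|hc|hc
    · exact absurd h (ne_of_lt (hsi_mono _ _ hc))
    · exact hc
    · exact absurd h.symm (ne_of_lt (hsi_mono _ _ hc))
  set Tv := (Finset.range (u+1)).image tj with hTv
  set Th := (Finset.range (v+1)).image si with hTh
  set T := Tv ∪ Th with hT
  have hdisjT : Disjoint Tv Th := by
    rw [Finset.disjoint_left]
    rintro x hx hx'
    rw [hTv, Finset.mem_image] at hx
    rw [hTh, Finset.mem_image] at hx'
    obtain ⟨j, hj, rfl⟩ := hx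
    obtain ⟨i, hi, heq⟩ := hx'
    exact hdisj j (Nat.lt_succ_iff.mp (Finset.mem_range.mp hj))
      i (Nat.lt_succ_iff.mp (Finset.mem_range.mp hi)) heq.symm
  have hTcard : T.card = u + v + 2 := by
    rw [hT, Finset.card_union_of_disjoint hdisjT, hTv, hTh,
      Finset.card_image_of_injective _ htj_inj, Finset.card_image_of_injective _ hsi_inj,
      Finset.card_range, Finset.card_range]
    omega
  have hTIoo : ∀ x ∈ T, x ∈ Set.Ioo (0:ℝ) 1 := by
    intro x hx
    rw [hT, Finset.mem_union] at hx
    rcases hx with hx | hx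
    · rw [hTv, Finset.mem_image] at hx
      obtain ⟨j, hj, rfl⟩ := hx
      have hju : j ≤ u := Nat.lt_succ_iff.mp (Finset.mem_range.mp hj)
      have hju' : (j:ℝ) ≤ (u:ℝ) := by exact_mod_cast hju
      constructor
      · rw [htj]; positivity
      · rw [htj]
        simp only
        rw [div_lt_one hDx0, hDx]
        linarith
    · rw [hTh, Finset.mem_image] at hx
      obtain ⟨i, hi, rfl⟩ := hx
      have hiv : i ≤ v := Nat.lt_succ_iff.mp (Finset.mem_range.mp hi)
      have hiv' : (i:ℝ) ≤ (v:ℝ) := by exact_mod_cast hiv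
      constructor
      · rw [hsi]; positivity
      · rw [hsi]
        simp only
        rw [div_lt_one hDy0, hDy]
        linarith
  have main : ∀ r : ℕ, r ≤ u + v + 2 → ∃ kl : ℤ × ℤ, kl.1 + kl.2 = (r:ℤ) - 2 ∧
      (segment ℝ p q ∩ tileInt a b kl.1 kl.2).Nonempty := by
    intro r hr
    obtain ⟨t, htIoo, htT, hcard⟩ := pick_point T hTIoo r (by rw [hTcard]; omega)
    have hneX : ∀ j ≤ u, ((j:ℝ) + δ)/Dx ≠ t := by
      intro j hj hh
      exact htT (hh ▸ Finset.mem_union_left _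
        (Finset.mem_image_of_mem tj (Finset.mem_range.mpr (by omega))))
    have hneY : ∀ i ≤ v, ((i:ℝ) + δ)/Dy ≠ t := by
      intro i hi hh
      exact htT (hh ▸ Finset.mem_union_right _
        (Finset.mem_image_of_mem si (Finset.mem_range.mpr (by omega))))
    have hX := crossing δ Dx u hδ0 hδ1 hDx0 (by rw [hDx]; linarith) t htIoo.1 htIoo.2 hneX
    have hY := crossing δ Dy v hδ0 hδ1 hDy0 (by rw [hDy]; linarith) t htIoo.1 htIoo.2 hneY
    set cX := ((Finset.range (u+1)).filter (fun j : ℕ => ((j:ℝ)+δ)/Dx < t)).card with hcX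
    set cY := ((Finset.range (v+1)).filter (fun i : ℕ => ((i:ℝ)+δ)/Dy < t)).card with hcY
    have hsplit : cX + cY = r := by
      have e1 : T.filter (fun x => x < t) = Tv.filter (fun x => x < t) ∪ Th.filter (fun x => x < t) := by
        rw [hT, Finset.filter_union]
      have e2 : Tv.filter (fun x => x < t)
          = ((Finset.range (u+1)).filter (fun j : ℕ => tj j < t)).image tj := by
        rw [hTv]
        ext x
        simp only [Finset.mem_filter, Finset.mem_image]
        constructor
        · rintro ⟨⟨j, hj, rfl⟩, hlt⟩
          exact ⟨j, ⟨hj, hlt⟩, rfl⟩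
        · rintro ⟨j, ⟨hj, hlt⟩, rfl⟩
          exact ⟨⟨j, hj, rfl⟩, hlt⟩
      have e3 : Th.filter (fun x => x < t)
          = ((Finset.range (v+1)).filter (fun i : ℕ => si i < t)).image si := by
        rw [hTh]
        ext x
        simp only [Finset.mem_filter, Finset.mem_image]
        constructor
        · rintro ⟨⟨j, hj, rfl⟩, hlt⟩
          exact ⟨j, ⟨hj, hlt⟩, rfl⟩
        · rintro ⟨j, ⟨hj, hlt⟩, rfl⟩
          exact ⟨⟨j, hj, rfl⟩, hlt⟩
      rw [e1, Finset.card_union_of_disjoint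
          (Finset.disjoint_filter_filter hdisjT), e2, e3,
          Finset.card_image_of_injective _ htj_inj,
          Finset.card_image_of_injective _ hsi_inj] at hcard
      rw [hcX, hcY]
      exact hcard
    refine ⟨((cX:ℤ) - 1, (cY:ℤ) - 1), by push_cast; omega, ⟨P t, hPseg t htIoo.1.le htIoo.2.le, ?_⟩⟩
    rw [mem_tile_iff]
    have hXa := hX.1
    have hXb := hX.2
    have hYa := hY.1
    have hYb := hY.2
    constructor
    · constructor
      · show (((cX:ℤ) - 1 : ℤ):ℝ) * a < (P t).1
        rw [hP]
        simp only
        push_cast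
        linarith [mul_lt_mul_of_pos_right hXa ha]
      · show (P t).1 < ((((cX:ℤ) - 1 : ℤ):ℝ) + 1) * a
        rw [hP]
        simp only
        push_cast
        linarith [mul_lt_mul_of_pos_right hXb ha]
    · constructor
      · show (((cY:ℤ) - 1 : ℤ):ℝ) * b < (P t).2
        rw [hP]
        simp only
        push_cast
        linarith [mul_lt_mul_of_pos_right hYa hb]
      · show (P t).2 < ((((cY:ℤ) - 1 : ℤ):ℝ) + 1) * b
        rw [hP]
        simp only
        push_cast
        linarith [mul_lt_mul_of_pos_right hYb hb]
  choose g hsum hvis using main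
  set g' : ℕ → ℤ × ℤ := fun r => if h : r ≤ u + v + 2 then g r h else 0 with hg'
  have hg'sum : ∀ r ≤ u + v + 2, (g' r).1 + (g' r).2 = (r:ℤ) - 2 := by
    intro r hr
    rw [hg']
    simp only [dif_pos hr]
    exact hsum r hr
  set F : Finset (ℤ × ℤ) := (Finset.range (u+v+3)).image g' with hF
  have hFcard : F.card = u + v + 3 := by
    rw [hF, Finset.card_image_of_injOn, Finset.card_range]
    intro r hr r' hr' heq
    have hr2 : r ≤ u + v + 2 := by have := Finset.mem_range.mp hr; omega
    have hr2' : r' ≤ u + v + 2 := by have := Finset.mem_range.mp hr'; omega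
    have e1 := hg'sum r hr2
    have e2 := hg'sum r' hr2'
    rw [heq] at e1
    have : (r:ℤ) = (r':ℤ) := by omega
    exact_mod_cast this
  have hsub : ↑F ⊆ {kl : ℤ × ℤ | (segment ℝ p q ∩ tileInt a b kl.1 kl.2).Nonempty} := by
    intro kl hkl
    rw [hF] at hkl
    simp only [Finset.coe_image, Set.mem_image, Finset.mem_coe, Finset.mem_range] at hkl
    obtain ⟨r, hr, rfl⟩ := hkl
    have hr2 : r ≤ u + v + 2 := by omega
    rw [hg']
    simp only [dif_pos hr2]
    exact hvis r hr2
  have hcount : u + v + 3 ≤ visitCount a b p q := by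
    rw [visitCount]
    calc u + v + 3 = F.card := hFcard.symm
      _ = (↑F : Set (ℤ × ℤ)).ncard := (Set.ncard_coe_finset F).symm
      _ ≤ _ := Set.ncard_le_ncard hsub (visit_finite ha hb p q)
  have hlen : segLen p q = Real.sqrt ((Dx*a)^2 + (Dy*b)^2) := by
    rw [segLen, hp, hq]
    simp only
    rw [hDx, hDy]
    congr 1
    ring
  refine ⟨p, q, ?_, ?_, hcount⟩
  · rw [hlen]
    apply Real.sqrt_pos.mpr
    positivity
  · rw [hlen]
    have e1 : Dx * a = (u:ℝ)*a + 4*δ*a := by rw [hDx]; ring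
    have e2 : Dy * b = (v:ℝ)*b + 2*δ*b := by rw [hDy]; ring
    rw [e1, e2]
    have hba := sqrt_bound (x := (u:ℝ)*a) (y := (v:ℝ)*b) (d := 4*δ*a) (e := 2*δ*b)
      (by positivity) (by positivity) (by positivity) (by positivity)
    have hfin : 4*δ*a + 2*δ*b ≤ (a+b)/(Q:ℝ) := by
      rw [hδ]
      have heq : 4*(1/(4*(Q:ℝ)))*a + 2*(1/(4*(Q:ℝ)))*b = (a + b/2)/(Q:ℝ) := by
        field_simp
        ring
      rw [heq]
      gcongr
      linarith
    calc Real.sqrt (((u:ℝ)*a + 4*δ*a)^2 + ((v:ℝ)*b + 2*δ*b)^2)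
        ≤ Real.sqrt (((u:ℝ)*a)^2 + ((v:ℝ)*b)^2) + (4*δ*a + 2*δ*b) := hba
      _ ≤ Real.sqrt (((u:ℝ)*a)^2 + ((v:ℝ)*b)^2) + (a+b)/(Q:ℝ) := by linarith

lemma S_nonempty (ha : 0 < a) (hb : 0 < b) (N : ℕ) :
    {ℓ : ℝ | 0 < ℓ ∧ ∃ p q : ℝ × ℝ, segLen p q = ℓ ∧ N ≤ visitCount a b p q}.Nonempty := by
  obtain ⟨p, q, hpos, _, hcount⟩ := construct ha hb N 0 1 le_rfl
  exact ⟨segLen p q, hpos, p, q, rfl, by omega⟩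

lemma S_bdd (N : ℕ) :
    BddBelow {ℓ : ℝ | 0 < ℓ ∧ ∃ p q : ℝ × ℝ, segLen p q = ℓ ∧ N ≤ visitCount a b p q} :=
  ⟨0, fun x hx => hx.1.le⟩

lemma infLen_ge (ha : 0 < a) (hb : 0 < b) (N : ℕ) (hN : 3 ≤ N) :
    hval a b (N - 3) ≤ infLen a b N := by
  rw [infLen]
  apply le_csInf (S_nonempty ha hb N)
  rintro ℓ ⟨hl0, p, q, rfl, hcount⟩
  have hc := le_trans hcount (count_le ha hb p q)
  set W := normWidth a p q with hW
  set H := normHeight b p q with hH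
  have hZ : (N:ℤ) ≤ W + H - 1 := by omega
  set u0 := (W - 2).toNat with hu0
  set v0 := (H - 2).toNat with hv0
  have hm : N - 3 ≤ u0 + v0 := by omega
  set u := min u0 (N - 3) with hu
  set v := N - 3 - u with hv
  have huv : u + v = N - 3 := by omega
  have hule : u ≤ u0 := by omega
  have hvle : v ≤ v0 := by omega
  have h1 : hval a b (N-3) ≤ Real.sqrt (((u:ℝ)*a)^2 + ((((N-3) - u : ℕ):ℝ)*b)^2) :=
    hval_le (by omega)
  have hveq : ((N-3) - u : ℕ) = v := by omega
  rw [hveq] at h1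
  refine le_trans h1 (lenLB (by positivity) (by positivity) ?_ ?_)
  · have hcast : (u:ℝ) ≤ (u0:ℝ) := by exact_mod_cast hule
    calc (u:ℝ)*a ≤ (u0:ℝ)*a := by nlinarith
      _ ≤ |p.1 - q.1| := widthLB ha p q
  · have hcast : (v:ℝ) ≤ (v0:ℝ) := by exact_mod_cast hvle
    calc (v:ℝ)*b ≤ (v0:ℝ)*b := by nlinarith
      _ ≤ |p.2 - q.2| := heightLB hb p q

lemma infLen_le (ha : 0 < a) (hb : 0 < b) (N : ℕ) (hN : 3 ≤ N) :
    infLen a b N ≤ hval a b (N - 3) := by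
  apply le_of_forall_pos_le_add
  intro ε hε
  set m := N - 3 with hm
  have hex : ∃ u ∈ Finset.range (m+1), hval a b m
      = Real.sqrt (((u:ℝ)*a)^2 + (((m-u : ℕ):ℝ)*b)^2) := by
    unfold hval
    exact Finset.exists_mem_eq_inf' _ _
  obtain ⟨u, hu, heq⟩ := hex
  have hum : u ≤ m := by have := Finset.mem_range.mp hu; omega
  set v := m - u with hv
  obtain ⟨Q, hQgt⟩ := exists_nat_gt ((a+b)/ε)
  have hQ1 : 1 ≤ Q := by
    by_contra h
    push_neg at h
    interval_cases Q
    · simp at hQgt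
      nlinarith [div_pos (by linarith : (0:ℝ) < a + b) hε]
  obtain ⟨p, q, hpos, hlen, hcount⟩ := construct ha hb u v Q hQ1
  have hQR : (0:ℝ) < (Q:ℝ) := by exact_mod_cast Nat.pos_of_ne_zero (by omega)
  have hmem : segLen p q ∈ {ℓ : ℝ | 0 < ℓ ∧ ∃ p' q' : ℝ × ℝ, segLen p' q' = ℓ ∧ N ≤ visitCount a b p' q'} :=
    ⟨hpos, p, q, rfl, by omega⟩
  have h1 : infLen a b N ≤ segLen p q := csInf_le (S_bdd N) hmem
  have h2 : (a+b)/(Q:ℝ) ≤ ε := by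
    rw [div_le_iff₀ hQR]
    rw [div_lt_iff₀ hε] at hQgt
    linarith
  calc infLen a b N ≤ segLen p q := h1
    _ ≤ Real.sqrt (((u:ℝ)*a)^2 + ((v:ℝ)*b)^2) + (a+b)/(Q:ℝ) := hlen
    _ ≤ hval a b m + ε := by rw [heq, hv]; linarith
    _ = hval a b (N-3) + ε := by rw [hm]

theorem final_result (a b : ℝ) (ha : 0 < a) (hb : 0 < b) :
    (∀ N : ℕ, 2 ≤ N → infLen a b (N - 1) ≤ infLen a b N) ∧
    (∀ N : ℕ, 4 ≤ N → infLen a b (N - 1) < infLen a b N) := by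
  constructor
  · intro N hN
    rw [infLen, infLen]
    apply csInf_le_csInf (S_bdd (N-1)) (S_nonempty ha hb N)
    rintro ℓ ⟨h0, p, q, hl, hc⟩
    exact ⟨h0, p, q, hl, le_trans (by omega) hc⟩
  · intro N hN
    have h1 : infLen a b (N-1) ≤ hval a b (N-4) := by
      have := infLen_le ha hb (N-1) (by omega)
      rwa [show N-1-3 = N-4 by omega] at this
    have h2 : hval a b (N-4) < hval a b (N-3) := by
      have := hval_lt ha hb (N-4)
      rwa [show N-4+1 = N-3 by omega] at this
    have h3 := infLen_ge ha hb N (by omega)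
    linarith

end GridAux

theorem stmt_10 (a b : ℝ) (ha : 0 < a) (hb : 0 < b) :
    (∀ N : ℕ, 2 ≤ N → infLen a b (N - 1) ≤ infLen a b N) ∧
    (∀ N : ℕ, 4 ≤ N → infLen a b (N - 1) < infLen a b N) :=
  GridAux.final_result a b ha hb
end

section
/- For the unit square grid (a = b = 1) and every ℓ > 0, the maximum number of tiles visited by a segment of length ℓ is M(ℓ) = ⌊√(2·⌈ℓ²⌉ − 2)⌋ + 3. -/
open Set

/-!
The tiles visited by a segment of nonnegative slope have pairwise distinct index sums `k + l`
(for nonpositive slope: differences `k - l`), and these lie in a range of `W + H - 1` integers,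
where `W < |Δx| + 2` and `H < |Δy| + 2` are the sides of the discrete bounding box. With
`u = W - 2`, `v = H - 2` one has `u² + v² < ℓ²`, i.e. `u² + v² ≤ ⌈ℓ²⌉ - 1`, and
`(u + v)² ≤ 2 (u² + v²)` bounds `u + v` by `⌊√(2⌈ℓ²⌉ - 2)⌋`.

Conversely, split `⌊√(2⌈ℓ²⌉ - 2)⌋ = u + v` evenly, so that `u² + v² < ℓ²`, and take a segment of
length `ℓ` with `Δx > u`, `Δy > v`, starting in the tile `(-1, -1)`, in general position. It
meets each line `x + y = n`, `0 ≤ n ≤ u + v`, at a point off the grid lines, which lies in a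
tile with `k + l = n - 1`; with the first and the last tile this gives `u + v + 3` tiles.
-/

def visitedTiles (p q : ℝ × ℝ) : Set (ℤ × ℤ) :=
  {kl | (segment ℝ p q ∩ tileInt 1 1 kl.1 kl.2).Nonempty}

lemma visitCount_one_one_eq_ncard (p q : ℝ × ℝ) :
    visitCount 1 1 p q = (visitedTiles p q).ncard := rfl

lemma mem_tileInt_one_one {z : ℝ × ℝ} {k l : ℤ} :
    z ∈ tileInt 1 1 k l ↔ ((k : ℝ) < z.1 ∧ z.1 < k + 1) ∧ ((l : ℝ) < z.2 ∧ z.2 < l + 1) := by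
  simp [tileInt]

lemma mem_tileInt_floor {z : ℝ × ℝ} (h₁ : z.1 ∉ range ((↑) : ℤ → ℝ))
    (h₂ : z.2 ∉ range ((↑) : ℤ → ℝ)) : z ∈ tileInt 1 1 ⌊z.1⌋ ⌊z.2⌋ :=
  mem_tileInt_one_one.2
    ⟨⟨(Int.floor_le _).lt_of_ne fun h ↦ h₁ ⟨_, h⟩, Int.lt_floor_add_one _⟩,
      ⟨(Int.floor_le _).lt_of_ne fun h ↦ h₂ ⟨_, h⟩, Int.lt_floor_add_one _⟩⟩

lemma Set.ncard_Icc_int (a b : ℤ) : (Icc a b).ncard = (b + 1 - a).toNat := by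
  rw [← Finset.coe_Icc, ncard_coe_finset, Int.card_Icc]

section UpperBound

variable {p q : ℝ × ℝ}

lemma fst_mem_uIcc_of_mem_segment {z : ℝ × ℝ} (hz : z ∈ segment ℝ p q) :
    z.1 ∈ uIcc p.1 q.1 := by
  obtain ⟨a, b, ha, hb, hab, rfl⟩ := hz
  exact segment_eq_uIcc p.1 q.1 ▸ ⟨a, b, ha, hb, hab, by simp⟩

lemma snd_mem_uIcc_of_mem_segment {z : ℝ × ℝ} (hz : z ∈ segment ℝ p q) :
    z.2 ∈ uIcc p.2 q.2 := by
  obtain ⟨a, b, ha, hb, hab, rfl⟩ := hz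
  exact segment_eq_uIcc p.2 q.2 ▸ ⟨a, b, ha, hb, hab, by simp⟩

lemma mem_Icc_floor_ceil_of_mem_uIcc {a b x : ℝ} {k : ℤ} (hx : x ∈ uIcc a b)
    (hk : (k : ℝ) < x) (hk' : x < k + 1) : k ∈ Icc ⌊min a b⌋ (⌈max a b⌉ - 1) := by
  have h₁ : ⌊min a b⌋ < k + 1 := Int.floor_lt.2 (by push_cast; linarith [hx.1])
  have h₂ : k < ⌈max a b⌉ := Int.lt_ceil.2 (by linarith [hx.2])
  exact ⟨by omega, by omega⟩

lemma visitedTiles_subset (p q : ℝ × ℝ) :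
    visitedTiles p q ⊆
      Icc ⌊min p.1 q.1⌋ (⌈max p.1 q.1⌉ - 1) ×ˢ Icc ⌊min p.2 q.2⌋ (⌈max p.2 q.2⌉ - 1) := by
  rintro ⟨k, l⟩ ⟨z, hz, hzT⟩
  obtain ⟨⟨hk, hk'⟩, ⟨hl, hl'⟩⟩ := mem_tileInt_one_one.1 hzT
  exact ⟨mem_Icc_floor_ceil_of_mem_uIcc (fst_mem_uIcc_of_mem_segment hz) hk hk',
    mem_Icc_floor_ceil_of_mem_uIcc (snd_mem_uIcc_of_mem_segment hz) hl hl'⟩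

lemma visitedTiles_finite (p q : ℝ × ℝ) : (visitedTiles p q).Finite :=
  ((finite_Icc _ _).prod (finite_Icc _ _)).subset (visitedTiles_subset p q)

lemma exists_sub_mul_sub_eq_of_mem_segment {z w : ℝ × ℝ} (hz : z ∈ segment ℝ p q)
    (hw : w ∈ segment ℝ p q) :
    ∃ c : ℝ, (w.1 - z.1) * (w.2 - z.2) = c ^ 2 * ((q.1 - p.1) * (q.2 - p.2)) := by
  rw [segment_eq_image'] at hz hw
  obtain ⟨s, -, rfl⟩ := hz
  obtain ⟨t, -, rfl⟩ := hw
  exact ⟨t - s, by simp only [Prod.fst_add, Prod.snd_add, Prod.smul_fst, Prod.smul_snd,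
    Prod.fst_sub, Prod.snd_sub, smul_eq_mul]; ring⟩

lemma sub_mul_intCast_sub_pos {x y : ℝ} {k k' : ℤ} (hx : (k : ℝ) < x ∧ x < k + 1)
    (hy : (k' : ℝ) < y ∧ y < k' + 1) (hkk' : k ≠ k') : 0 < (y - x) * (k' - k) := by
  rcases hkk'.lt_or_gt with h | h
  · have : (k : ℝ) + 1 ≤ k' := by exact_mod_cast h
    exact mul_pos (by linarith) (by linarith)
  · have : (k' : ℝ) + 1 ≤ k := by exact_mod_cast h
    exact mul_pos_of_neg_of_neg (by linarith) (by linarith)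

lemma mul_pos_of_mem_visitedTiles {k l k' l' : ℤ} (h : (k, l) ∈ visitedTiles p q)
    (h' : (k', l') ∈ visitedTiles p q) (hk : k ≠ k') (hl : l ≠ l') :
    0 < (q.1 - p.1) * (q.2 - p.2) * (((k' - k) * (l' - l) : ℤ) : ℝ) := by
  obtain ⟨z, hz, hzT⟩ := h
  obtain ⟨w, hw, hwT⟩ := h'
  rw [mem_tileInt_one_one] at hzT hwT
  have h₁ := sub_mul_intCast_sub_pos hzT.1 hwT.1 hk
  have h₂ := sub_mul_intCast_sub_pos hzT.2 hwT.2 hl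
  obtain ⟨c, hc⟩ := exists_sub_mul_sub_eq_of_mem_segment hz hw
  have key : (w.1 - z.1) * (k' - k) * ((w.2 - z.2) * (l' - l)) =
      c ^ 2 * ((q.1 - p.1) * (q.2 - p.2) * (((k' - k) * (l' - l) : ℤ) : ℝ)) := by
    push_cast; linear_combination ((k' - k : ℝ) * (l' - l)) * hc
  exact pos_of_mul_pos_right (key ▸ mul_pos h₁ h₂) (sq_nonneg c)

lemma injOn_add_visitedTiles (hD : 0 ≤ (q.1 - p.1) * (q.2 - p.2)) :
    InjOn (fun kl : ℤ × ℤ ↦ kl.1 + kl.2) (visitedTiles p q) := by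
  rintro ⟨k, l⟩ h ⟨k', l'⟩ h' (hsum : k + l = k' + l')
  by_contra hne
  have hk : k ≠ k' := fun hk ↦ hne (by simp only [Prod.mk.injEq]; omega)
  have hkl : (k' - k) * (l' - l) ≤ 0 := by
    rw [show l' - l = -(k' - k) by omega, mul_neg]; exact neg_nonpos.2 (mul_self_nonneg _)
  have := mul_pos_of_mem_visitedTiles h h' hk (by omega)
  nlinarith [(Int.cast_nonpos (R := ℝ)).2 hkl]

lemma injOn_sub_visitedTiles (hD : (q.1 - p.1) * (q.2 - p.2) ≤ 0) :
    InjOn (fun kl : ℤ × ℤ ↦ kl.1 - kl.2) (visitedTiles p q) := by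
  rintro ⟨k, l⟩ h ⟨k', l'⟩ h' (hdiff : k - l = k' - l')
  by_contra hne
  have hk : k ≠ k' := fun hk ↦ hne (by simp only [Prod.mk.injEq]; omega)
  have hkl : 0 ≤ (k' - k) * (l' - l) := by
    rw [show l' - l = k' - k by omega]; exact mul_self_nonneg _
  have := mul_pos_of_mem_visitedTiles h h' hk (by omega)
  nlinarith [Int.cast_nonneg (R := ℝ) hkl]

lemma visitCount_le_normWidth_add_normHeight (p q : ℝ × ℝ) :
    visitCount 1 1 p q ≤ (normWidth 1 p q + normHeight 1 p q - 1).toNat := by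
  obtain ⟨x₀, x₁, y₀, y₁, hW, hH, hV⟩ : ∃ x₀ x₁ y₀ y₁ : ℤ, normWidth 1 p q = x₁ + 1 - x₀ ∧
      normHeight 1 p q = y₁ + 1 - y₀ ∧ visitedTiles p q ⊆ Icc x₀ x₁ ×ˢ Icc y₀ y₁ :=
    ⟨_, _, _, _, by simp [normWidth], by simp [normHeight], visitedTiles_subset p q⟩
  rw [visitCount_one_one_eq_ncard]
  rcases le_total 0 ((q.1 - p.1) * (q.2 - p.2)) with hD | hD
  · calc _ ≤ (Icc (x₀ + y₀) (x₁ + y₁)).ncard :=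
          ncard_le_ncard_of_injOn _ (fun kl hkl ↦ ?_) (injOn_add_visitedTiles hD)
      _ = _ := by rw [ncard_Icc_int, hW, hH]; congr 1; ring
    obtain ⟨⟨h₁, h₂⟩, ⟨h₃, h₄⟩⟩ := hV hkl
    exact ⟨by omega, by omega⟩
  · calc _ ≤ (Icc (x₀ - y₁) (x₁ - y₀)).ncard :=
          ncard_le_ncard_of_injOn _ (fun kl hkl ↦ ?_) (injOn_sub_visitedTiles hD)
      _ = _ := by rw [ncard_Icc_int, hW, hH]; congr 1; ring
    obtain ⟨⟨h₁, h₂⟩, ⟨h₃, h₄⟩⟩ := hV hkl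
    exact ⟨by omega, by omega⟩

lemma normWidth_lt_abs_add_two (p q : ℝ × ℝ) : (normWidth 1 p q : ℝ) < |p.1 - q.1| + 2 := by
  have h₁ := Int.ceil_lt_add_one (max p.1 q.1)
  have h₂ := Int.sub_one_lt_floor (min p.1 q.1)
  have h₃ : max p.1 q.1 - min p.1 q.1 = |p.1 - q.1| := max_sub_min_eq_abs' _ _
  simp only [normWidth, div_one]; push_cast; linarith

lemma normHeight_lt_abs_add_two (p q : ℝ × ℝ) : (normHeight 1 p q : ℝ) < |p.2 - q.2| + 2 := by
  have h₁ := Int.ceil_lt_add_one (max p.2 q.2)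
  have h₂ := Int.sub_one_lt_floor (min p.2 q.2)
  have h₃ : max p.2 q.2 - min p.2 q.2 = |p.2 - q.2| := max_sub_min_eq_abs' _ _
  simp only [normHeight, div_one]; push_cast; linarith

end UpperBound

section Arithmetic

variable {ℓ : ℝ}

lemma add_le_floor_sqrt_of_sq_add_sq_lt {u v : ℕ} (h : (u : ℝ) ^ 2 + (v : ℝ) ^ 2 < ℓ ^ 2) :
    (u + v : ℤ) ≤ ⌊√(2 * (⌈ℓ ^ 2⌉ : ℝ) - 2)⌋ := by
  have hC : (u : ℤ) ^ 2 + v ^ 2 < ⌈ℓ ^ 2⌉ := Int.lt_ceil.2 (by push_cast; exact h)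
  have hsq : (u + v : ℤ) ^ 2 ≤ 2 * ⌈ℓ ^ 2⌉ - 2 := by nlinarith [sq_nonneg ((u : ℤ) - v)]
  refine Int.le_floor.2 (Real.le_sqrt_of_sq_le ?_)
  exact_mod_cast hsq

lemma exists_sq_add_sq_lt_and_add_eq_floor_sqrt (hℓ : 0 < ℓ) :
    ∃ u v : ℕ, (u : ℝ) ^ 2 + (v : ℝ) ^ 2 < ℓ ^ 2 ∧ (u + v : ℤ) = ⌊√(2 * (⌈ℓ ^ 2⌉ : ℝ) - 2)⌋ := by
  have hC : 1 ≤ ⌈ℓ ^ 2⌉ := Int.one_le_ceil_iff.2 (by positivity)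
  obtain ⟨n, hn⟩ : ∃ n : ℕ, (n : ℤ) = ⌊√(2 * (⌈ℓ ^ 2⌉ : ℝ) - 2)⌋ :=
    Int.eq_ofNat_of_zero_le (Int.floor_nonneg.2 (Real.sqrt_nonneg _)) |>.imp fun _ h ↦ h.symm
  have hn2 : (n : ℤ) ^ 2 ≤ 2 * ⌈ℓ ^ 2⌉ - 2 := by
    have h₁ : (n : ℝ) ≤ √(2 * (⌈ℓ ^ 2⌉ : ℝ) - 2) := by exact_mod_cast hn ▸ Int.floor_le _
    have h₂ := (Real.le_sqrt (Nat.cast_nonneg n) (by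
      have : (1 : ℝ) ≤ ⌈ℓ ^ 2⌉ := by exact_mod_cast hC
      linarith)).1 h₁
    exact_mod_cast h₂
  obtain ⟨u, v, huv, hsplit⟩ : ∃ u v : ℕ, u + v = n ∧ 2 * ((u : ℤ) ^ 2 + v ^ 2) ≤ n ^ 2 + 1 := by
    obtain ⟨k, rfl | rfl⟩ := Nat.even_or_odd' n
    · exact ⟨k, k, by omega, by push_cast; nlinarith⟩
    · exact ⟨k + 1, k, by omega, by push_cast; nlinarith⟩
  refine ⟨u, v, ?_, by rw [← hn, ← huv]; push_cast; rfl⟩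
  have : (u : ℤ) ^ 2 + v ^ 2 < ⌈ℓ ^ 2⌉ := by omega
  exact_mod_cast Int.lt_ceil.1 this

end Arithmetic

lemma toNat_sub_two_sq_lt_sq_or_eq_zero {W : ℤ} {x : ℝ} (hW : (W : ℝ) < |x| + 2) :
    (((W - 2).toNat : ℕ) : ℝ) ^ 2 < x ^ 2 ∨ (((W - 2).toNat : ℕ) : ℝ) ^ 2 = 0 := by
  rcases le_or_gt W 2 with h | h
  · exact Or.inr (by simp [Int.toNat_eq_zero.2 (by omega : W - 2 ≤ 0)])
  · left
    have : (((W - 2).toNat : ℕ) : ℝ) = W - 2 := by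
      rw [show ((W - 2).toNat : ℝ) = (((W - 2).toNat : ℤ) : ℝ) by norm_cast,
        Int.toNat_of_nonneg (by omega)]
      push_cast; ring
    rw [this, ← sq_abs x]
    exact pow_lt_pow_left₀ (by linarith) (by linarith) two_ne_zero

theorem visitCount_le_of_segLen_eq {p q : ℝ × ℝ} {ℓ : ℝ} (hℓ : 0 < ℓ) (h : segLen p q = ℓ) :
    (visitCount 1 1 p q : ℤ) ≤ ⌊√(2 * (⌈ℓ ^ 2⌉ : ℝ) - 2)⌋ + 3 := by
  have hℓ2 : (p.1 - q.1) ^ 2 + (p.2 - q.2) ^ 2 = ℓ ^ 2 := by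
    rw [← h, segLen, Real.sq_sqrt (by positivity)]
  set u := (normWidth 1 p q - 2).toNat
  set v := (normHeight 1 p q - 2).toNat
  have huv : (u : ℝ) ^ 2 + (v : ℝ) ^ 2 < ℓ ^ 2 := by
    rcases toNat_sub_two_sq_lt_sq_or_eq_zero (normWidth_lt_abs_add_two p q) with hu | hu <;>
      rcases toNat_sub_two_sq_lt_sq_or_eq_zero (normHeight_lt_abs_add_two p q) with hv | hv <;>
      nlinarith [sq_nonneg (p.1 - q.1), sq_nonneg (p.2 - q.2)]
  have := add_le_floor_sqrt_of_sq_add_sq_lt huv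
  have := visitCount_le_normWidth_add_normHeight p q
  omega

lemma floor_add_floor_of_add_eq_intCast {a b : ℝ} {n : ℤ} (hab : a + b = n)
    (ha : a ∉ range ((↑) : ℤ → ℝ)) : ⌊a⌋ + ⌊b⌋ = n - 1 := by
  rw [show b = n + -a by linarith, Int.floor_intCast_add, Int.floor_neg,
    (Int.ceil_eq_floor_add_one_iff_notMem a).2 ha]
  ring

lemma exists_mem_visitedTiles_add_eq {p q : ℝ × ℝ}
    (hL : ∀ m n : ℤ, ((m : ℝ), (n : ℝ)) ∉ segment ℝ p q) {n : ℤ}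
    (hp : p.1 + p.2 ≤ n) (hq : n ≤ q.1 + q.2) :
    ∃ kl ∈ visitedTiles p q, kl.1 + kl.2 = n - 1 := by
  obtain ⟨z, hz, hzn⟩ := (convex_segment p q).isPreconnected.intermediate_value
    (left_mem_segment ℝ p q) (right_mem_segment ℝ p q)
    (f := fun z : ℝ × ℝ ↦ z.1 + z.2) (by fun_prop) ⟨hp, hq⟩
  have hz₁ : z.1 ∉ range ((↑) : ℤ → ℝ) := by
    rintro ⟨m, hm⟩
    have : z = ((m : ℝ), ((n - m : ℤ) : ℝ)) := Prod.ext hm.symm (by push_cast; linarith)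
    rw [this] at hz; exact hL _ _ hz
  have hz₂ : z.2 ∉ range ((↑) : ℤ → ℝ) := by
    rintro ⟨m, hm⟩
    have : z = (((n - m : ℤ) : ℝ), (m : ℝ)) := Prod.ext (by push_cast; linarith) hm.symm
    rw [this] at hz; exact hL _ _ hz
  exact ⟨(⌊z.1⌋, ⌊z.2⌋), ⟨z, hz, mem_tileInt_floor hz₁ hz₂⟩,
    floor_add_floor_of_add_eq_intCast hzn hz₁⟩

lemma add_three_le_visitCount {p q : ℝ × ℝ}
    (hL : ∀ m n : ℤ, ((m : ℝ), (n : ℝ)) ∉ segment ℝ p q) (hp : p ∈ tileInt 1 1 (-1) (-1))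
    {N k l : ℤ} (hq : q ∈ tileInt 1 1 k l) (hN : N ≤ k + l) :
    N + 3 ≤ (visitCount 1 1 p q : ℤ) := by
  have hp' := mem_tileInt_one_one.1 hp
  have hq' := mem_tileInt_one_one.1 hq
  norm_num at hp'
  have hk : ((k + l : ℤ) : ℝ) < q.1 + q.2 := by push_cast; linarith
  -- truncated at `N` because the index sum of the tile of `q` may exceed `N`
  have hcover : Icc (-2) N ⊆ (fun kl : ℤ × ℤ ↦ min (kl.1 + kl.2) N) '' visitedTiles p q := by
    rintro m ⟨hm₁, hm₂⟩
    by_cases hmN : m = N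
    · exact ⟨(k, l), ⟨q, right_mem_segment ℝ p q, hq⟩, by simp [hmN, hN]⟩
    by_cases hm : m = -2
    · exact ⟨(-1, -1), ⟨p, left_mem_segment ℝ p q, hp⟩, by simp only; omega⟩
    obtain ⟨kl, hkl, hsum⟩ := exists_mem_visitedTiles_add_eq hL (n := m + 1)
      (by push_cast; linarith [(by exact_mod_cast (show -1 ≤ m by omega) : (-1 : ℝ) ≤ m)])
      (hk.le.trans' (by exact_mod_cast (show m + 1 ≤ k + l by omega)))
    exact ⟨kl, hkl, by simp only [hsum]; omega⟩
  have h₁ := ncard_le_ncard hcover ((visitedTiles_finite p q).image _)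
  have h₂ := ncard_image_le (f := fun kl : ℤ × ℤ ↦ min (kl.1 + kl.2) N) (visitedTiles_finite p q)
  rw [ncard_Icc_int] at h₁
  rw [visitCount_one_one_eq_ncard]
  omega

lemma exists_lt_lt_sq_add_sq_eq {a b c : ℝ} (ha : 0 ≤ a) (hb : 0 ≤ b) (h : a ^ 2 + b ^ 2 < c ^ 2) :
    ∃ x y : ℝ, a < x ∧ b < y ∧ x ^ 2 + y ^ 2 = c ^ 2 := by
  set δ := (c ^ 2 - a ^ 2 - b ^ 2) / 2
  have hδ : 0 < δ := by simp only [δ]; linarith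
  refine ⟨√(a ^ 2 + δ), √(b ^ 2 + δ), (Real.lt_sqrt ha).2 (by linarith),
    (Real.lt_sqrt hb).2 (by linarith), ?_⟩
  rw [Real.sq_sqrt (by positivity), Real.sq_sqrt (by positivity)]
  simp only [δ]; ring

lemma exists_mem_Ioo_notMem_of_countable {a b : ℝ} (h : a < b) {B : Set ℝ} (hB : B.Countable) :
    ∃ t ∈ Ioo a b, t ∉ B :=
  let ⟨t, htB, ht⟩ := (hB.dense_compl ℝ).exists_between h
  ⟨t, ht, htB⟩

lemma intCast_notMem_segment {θ θ' dx dy : ℝ} (hdx : 0 < dx)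
    (hθ' : θ' ∉ range fun mn : ℤ × ℤ ↦ (mn.1 + θ) * dy / dx - mn.2) (m n : ℤ) :
    ((m : ℝ), (n : ℝ)) ∉ segment ℝ (-θ, -θ') (dx - θ, dy - θ') := by
  rw [segment_eq_image']
  rintro ⟨t, -, ht⟩
  simp only [Prod.ext_iff, Prod.fst_add, Prod.snd_add, Prod.smul_fst, Prod.smul_snd,
    Prod.fst_sub, Prod.snd_sub, smul_eq_mul] at ht
  refine hθ' ⟨(m, n), ?_⟩
  rw [sub_eq_iff_eq_add, div_eq_iff hdx.ne']
  linear_combination -dy * ht.1 + dx * ht.2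

lemma exists_segment_of_sq_add_sq_lt {ℓ : ℝ} (hℓ : 0 < ℓ) {u v : ℕ}
    (h : (u : ℝ) ^ 2 + (v : ℝ) ^ 2 < ℓ ^ 2) :
    ∃ p q : ℝ × ℝ, segLen p q = ℓ ∧ (∀ m n : ℤ, ((m : ℝ), (n : ℝ)) ∉ segment ℝ p q) ∧
      p ∈ tileInt 1 1 (-1) (-1) ∧ ∃ k l : ℤ, q ∈ tileInt 1 1 k l ∧ (u + v : ℤ) ≤ k + l := by
  obtain ⟨dx, dy, hu, hv, hℓ2⟩ :=
    exists_lt_lt_sq_add_sq_eq (Nat.cast_nonneg u) (Nat.cast_nonneg v) h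
  have hdx : 0 < dx := (Nat.cast_nonneg u).trans_lt hu
  obtain ⟨θ, ⟨hθ₀, hθ⟩, hθB⟩ := exists_mem_Ioo_notMem_of_countable
    (lt_min one_pos (sub_pos.2 hu)) (countable_range fun n : ℤ ↦ dx - n)
  obtain ⟨θ', ⟨hθ'₀, hθ'⟩, hθ'B⟩ := exists_mem_Ioo_notMem_of_countable
    (lt_min one_pos (sub_pos.2 hv)) ((countable_range fun n : ℤ ↦ dy - n).union
      (countable_range fun mn : ℤ × ℤ ↦ (mn.1 + θ) * dy / dx - mn.2))
  rw [lt_min_iff] at hθ hθ'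
  have hq₁ : dx - θ ∉ range ((↑) : ℤ → ℝ) := fun ⟨n, hn⟩ ↦ hθB ⟨n, by simp [hn]⟩
  have hq₂ : dy - θ' ∉ range ((↑) : ℤ → ℝ) := fun ⟨n, hn⟩ ↦ hθ'B (.inl ⟨n, by simp [hn]⟩)
  refine ⟨(-θ, -θ'), (dx - θ, dy - θ'), ?_, intCast_notMem_segment hdx fun h ↦ hθ'B (.inr h),
    mem_tileInt_one_one.2 (by norm_num; constructor <;> constructor <;> linarith),
    _, _, mem_tileInt_floor hq₁ hq₂, ?_⟩
  · rw [segLen, ← Real.sqrt_sq hℓ.le, ← hℓ2]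
    ring_nf
  · show (u + v : ℤ) ≤ ⌊dx - θ⌋ + ⌊dy - θ'⌋
    have : (u : ℤ) ≤ ⌊dx - θ⌋ := Int.le_floor.2 (by push_cast; linarith)
    have : (v : ℤ) ≤ ⌊dy - θ'⌋ := Int.le_floor.2 (by push_cast; linarith)
    omega

theorem exists_segLen_eq_floor_sqrt_add_three_le_visitCount {ℓ : ℝ} (hℓ : 0 < ℓ) :
    ∃ p q : ℝ × ℝ, segLen p q = ℓ ∧
      ⌊√(2 * (⌈ℓ ^ 2⌉ : ℝ) - 2)⌋ + 3 ≤ (visitCount 1 1 p q : ℤ) := by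
  obtain ⟨u, v, huv, hs⟩ := exists_sq_add_sq_lt_and_add_eq_floor_sqrt hℓ
  obtain ⟨p, q, hpq, hL, hp, k, l, hq, hkl⟩ := exists_segment_of_sq_add_sq_lt hℓ huv
  exact ⟨p, q, hpq, hs ▸ add_three_le_visitCount hL hp hq hkl⟩

theorem stmt_12 (ℓ : ℝ) (hℓ : 0 < ℓ) :
    (maxTiles 1 1 ℓ : ℤ) = ⌊Real.sqrt (2 * (⌈ℓ ^ 2⌉ : ℝ) - 2)⌋ + 3 := by
  obtain ⟨p, q, hpq, hge⟩ := exists_segLen_eq_floor_sqrt_add_three_le_visitCount hℓ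
  have hmax : IsGreatest {n | ∃ p q : ℝ × ℝ, segLen p q = ℓ ∧ visitCount 1 1 p q = n}
      (visitCount 1 1 p q) := by
    refine ⟨⟨p, q, hpq, rfl⟩, ?_⟩
    rintro _ ⟨p', q', hpq', rfl⟩
    have := visitCount_le_of_segLen_eq hℓ hpq'
    omega
  rw [maxTiles, hmax.csSup_eq]
  have := visitCount_le_of_segLen_eq hℓ hpq
  omega
end

section
/- Define φ : ℕ≥1 → ℕ by φ(L) = ⌊√(2·L² − 2)⌋ + 3 (the maximum number of tiles of the unit square grid visited by a segment of integer length L). Then: (a) φ(L+1) − φ(L) ∈ {1, 2} for every L ≥ 1; (b) for every L ≥ 1, at least one of the three increments φ(L+1)−φ(L), φ(L+2)−φ(L+1), φ(L+3)−φ(L+2) equals 2; (c) for every L ≥ 3, the two increments φ(L+1)−φ(L) and φ(L+2)−φ(L+1) are not both equal to 2. -/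
/-- `phi L` : maximum number of tiles of the unit square grid visited by a segment of
integer length `L`, namely `⌊√(2·L² − 2)⌋ + 3`. -/
noncomputable def phi (L : ℕ) : ℤ := ⌊Real.sqrt (2 * (L : ℝ) ^ 2 - 2)⌋ + 3

lemma phi_eq (L : ℕ) (hL : 1 ≤ L) : phi L = (Nat.sqrt (2 * L ^ 2 - 2) : ℤ) + 3 := by
  have h2 : 2 ≤ 2 * L ^ 2 := by nlinarith
  have hc : (2 * (L : ℝ) ^ 2 - 2) = ((2 * L ^ 2 - 2 : ℕ) : ℝ) := by
    push_cast [Nat.cast_sub h2]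
    ring
  rw [phi, hc, Real.floor_real_sqrt_eq_nat_sqrt]

lemma sqrt_bounds (L : ℕ) (hL : 1 ≤ L) :
    (Nat.sqrt (2 * L ^ 2 - 2) : ℤ) ^ 2 + 2 ≤ 2 * (L : ℤ) ^ 2 ∧
    2 * (L : ℤ) ^ 2 < ((Nat.sqrt (2 * L ^ 2 - 2) : ℤ) + 1) ^ 2 + 2 := by
  have h2 : 2 ≤ 2 * L ^ 2 := by nlinarith
  have h := Nat.sqrt_le' (2 * L ^ 2 - 2)
  have h' := Nat.lt_succ_sqrt' (2 * L ^ 2 - 2)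
  rw [Nat.le_sub_iff_add_le h2] at h
  rw [Nat.sub_lt_iff_lt_add h2] at h'
  constructor
  · exact_mod_cast by nlinarith [h] 
  · exact_mod_cast by nlinarith [h']

lemma step_bounds (L : ℕ) (hL : 1 ≤ L) :
    (Nat.sqrt (2 * L ^ 2 - 2) : ℤ) + 1 ≤ (Nat.sqrt (2 * (L + 1) ^ 2 - 2) : ℤ) ∧
    (Nat.sqrt (2 * (L + 1) ^ 2 - 2) : ℤ) ≤ (Nat.sqrt (2 * L ^ 2 - 2) : ℤ) + 2 := by
  obtain ⟨ha1, ha2⟩ := sqrt_bounds L hL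
  obtain ⟨hb1, hb2⟩ := sqrt_bounds (L + 1) (by omega)
  set a : ℤ := (Nat.sqrt (2 * L ^ 2 - 2) : ℤ) with ha
  set b : ℤ := (Nat.sqrt (2 * (L + 1) ^ 2 - 2) : ℤ) with hb
  have ha0 : 0 ≤ a := Int.natCast_nonneg _
  have hb0 : 0 ≤ b := Int.natCast_nonneg _
  have hL1 : (1 : ℤ) ≤ (L : ℤ) := by exact_mod_cast hL
  push_cast at hb1 hb2
  constructor
  · by_contra h
    push_neg at h
    have hba : b ≤ a := by omega
    nlinarith [sq_nonneg (a - 2 * (L : ℤ)), sq_nonneg (a + b), mul_le_mul_of_nonneg_left hba hb0]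
  · by_contra h
    push_neg at h
    have hab : a + 3 ≤ b := by omega
    have h1 : (a + 3) * (a + 3) ≤ b * b :=
      mul_self_le_mul_self (by linarith) hab
    have haL : a + 2 ≤ (L : ℤ) := by nlinarith [h1, hb1, ha2]
    have h2 : (a + 1) * (a + 1) ≤ ((L : ℤ) - 1) * ((L : ℤ) - 1) :=
      mul_self_le_mul_self (by linarith) (by linarith)
    nlinarith [ha2, h2, sq_nonneg ((L : ℤ) - 1)]

theorem stmt_14 :
    (∀ L : ℕ, 1 ≤ L → phi (L + 1) - phi L = 1 ∨ phi (L + 1) - phi L = 2) ∧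
    (∀ L : ℕ, 1 ≤ L →
      phi (L + 1) - phi L = 2 ∨ phi (L + 2) - phi (L + 1) = 2 ∨
        phi (L + 3) - phi (L + 2) = 2) ∧
    (∀ L : ℕ, 3 ≤ L →
      ¬(phi (L + 1) - phi L = 2 ∧ phi (L + 2) - phi (L + 1) = 2)) := by
  refine ⟨?_, ?_, ?_⟩
  · intro L hL
    rw [phi_eq L hL, phi_eq (L + 1) (by omega)]
    obtain ⟨h1, h2⟩ := step_bounds L hL
    omega
  · intro L hL
    rw [phi_eq L hL, phi_eq (L + 1) (by omega), phi_eq (L + 2) (by omega),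
      phi_eq (L + 3) (by omega)]
    obtain ⟨h1, h2⟩ := step_bounds L hL
    obtain ⟨h3, h4⟩ := step_bounds (L + 1) (by omega)
    obtain ⟨h5, h6⟩ := step_bounds (L + 2) (by omega)
    rw [show L + 1 + 1 = L + 2 from rfl] at h3 h4
    rw [show L + 2 + 1 = L + 3 from rfl] at h5 h6
    -- total jump over 3 steps is at least 4
    obtain ⟨ha1, ha2⟩ := sqrt_bounds L hL
    obtain ⟨hd1, hd2⟩ := sqrt_bounds (L + 3) (by omega)
    set a : ℤ := (Nat.sqrt (2 * L ^ 2 - 2) : ℤ)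
    set d : ℤ := (Nat.sqrt (2 * (L + 3) ^ 2 - 2) : ℤ)
    have ha0 : 0 ≤ a := Int.natCast_nonneg _
    have hd0 : 0 ≤ d := Int.natCast_nonneg _
    have hL1 : (1 : ℤ) ≤ (L : ℤ) := by exact_mod_cast hL
    push_cast at hd1 hd2
    have htot : a + 4 ≤ d := by
      by_contra h
      push_neg at h
      have hda : d ≤ a + 3 := by omega
      have h1 : (d + 1) * (d + 1) ≤ (a + 4) * (a + 4) :=
        mul_self_le_mul_self (by linarith) (by linarith)
      have h2 : 2 * a ≤ 3 * (L : ℤ) := by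
        by_contra hx
        push_neg at hx
        have hy : (3 * (L : ℤ) + 1) * (3 * (L : ℤ) + 1) ≤ (2 * a) * (2 * a) :=
          mul_self_le_mul_self (by linarith) (by linarith)
        have hz : (4 : ℤ) * 4 ≤ ((L : ℤ) + 3) * ((L : ℤ) + 3) :=
          mul_self_le_mul_self (by norm_num) (by linarith)
        linarith [ha1, hy, hz]
      linarith [hd2, h1, h2, ha1]
    omega
  · intro L hL
    rintro ⟨hab, hbc⟩
    rw [phi_eq L (by omega), phi_eq (L + 1) (by omega)] at hab
    rw [phi_eq (L + 1) (by omega), phi_eq (L + 2) (by omega)] at hbc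
    obtain ⟨ha1, ha2⟩ := sqrt_bounds L (by omega)
    obtain ⟨hc1, hc2⟩ := sqrt_bounds (L + 2) (by omega)
    set a : ℤ := (Nat.sqrt (2 * L ^ 2 - 2) : ℤ)
    set c : ℤ := (Nat.sqrt (2 * (L + 2) ^ 2 - 2) : ℤ)
    have hc4 : c = a + 4 := by omega
    have hL3 : (3 : ℤ) ≤ (L : ℤ) := by exact_mod_cast hL
    push_cast at hc1 hc2
    rw [hc4] at hc1
    have h6a : 3 * a + 3 ≤ 4 * (L : ℤ) - 1 := by nlinarith [hc1, ha2]
    have h2 : (3 * a + 3) * (3 * a + 3) ≤ (4 * (L : ℤ) - 1) * (4 * (L : ℤ) - 1) :=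
      mul_self_le_mul_self (by linarith) h6a
    nlinarith [ha2, h2, sq_nonneg ((L : ℤ) - 3)]
end

section
/- For the unit square grid (a = b = 1), define for each integer N ≥ 1 the quantity λ(N) = min{L ∈ ℕ, L ≥ 1 : some segment of length L visits at least N tiles}. Then λ(N) = 1 for N ≤ 3, and λ(N) = ⌈√((N−3)²/2 + 1)⌉ for every integer N ≥ 4. -/
open Set

def VSet (p q : ℝ × ℝ) : Set (ℤ × ℤ) :=
  {kl : ℤ × ℤ | (segment ℝ p q ∩ tileInt 1 1 kl.1 kl.2).Nonempty}

lemma visitCount_eq (p q : ℝ × ℝ) : visitCount 1 1 p q = (VSet p q).ncard := rfl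

lemma seg_coord {p q z : ℝ × ℝ} (hz : z ∈ segment ℝ p q) :
    ∃ t : ℝ, 0 ≤ t ∧ t ≤ 1 ∧ z.1 = p.1 + t * (q.1 - p.1) ∧ z.2 = p.2 + t * (q.2 - p.2) := by
  rw [segment_eq_image] at hz
  obtain ⟨t, ht, hzt⟩ := hz
  refine ⟨t, ht.1, ht.2, ?_, ?_⟩ <;> rw [← hzt] <;> simp <;> ring

lemma mem_bounds {p q : ℝ × ℝ} {k l : ℤ} (h : (k, l) ∈ VSet p q) :
    ⌊min p.1 q.1⌋ ≤ k ∧ k ≤ ⌈max p.1 q.1⌉ - 1 ∧ ⌊min p.2 q.2⌋ ≤ l ∧ l ≤ ⌈max p.2 q.2⌉ - 1 := by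
  obtain ⟨z, hzs, hzt⟩ := h
  obtain ⟨t, ht0, ht1, hx, hy⟩ := seg_coord hzs
  obtain ⟨⟨hx1, hx2⟩, ⟨hy1, hy2⟩⟩ := hzt
  simp only [mul_one] at hx1 hx2 hy1 hy2
  have hzx1 : min p.1 q.1 ≤ z.1 := by
    rcases le_total p.1 q.1 with h | h
    · rw [min_eq_left h]; nlinarith
    · rw [min_eq_right h]; nlinarith
  have hzx2 : z.1 ≤ max p.1 q.1 := by
    rcases le_total p.1 q.1 with h | h
    · rw [max_eq_right h]; nlinarith
    · rw [max_eq_left h]; nlinarith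
  have hzy1 : min p.2 q.2 ≤ z.2 := by
    rcases le_total p.2 q.2 with h | h
    · rw [min_eq_left h]; nlinarith
    · rw [min_eq_right h]; nlinarith
  have hzy2 : z.2 ≤ max p.2 q.2 := by
    rcases le_total p.2 q.2 with h | h
    · rw [max_eq_right h]; nlinarith
    · rw [max_eq_left h]; nlinarith
  refine ⟨?_, ?_, ?_, ?_⟩
  · have : ⌊min p.1 q.1⌋ < k + 1 := by
      rw [Int.floor_lt]; push_cast; linarith
    omega
  · have : k < ⌈max p.1 q.1⌉ := by
      rw [Int.lt_ceil]; linarith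
    omega
  · have : ⌊min p.2 q.2⌋ < l + 1 := by
      rw [Int.floor_lt]; push_cast; linarith
    omega
  · have : l < ⌈max p.2 q.2⌉ := by
      rw [Int.lt_ceil]; linarith
    omega

lemma VSet_finite (p q : ℝ × ℝ) : (VSet p q).Finite := by
  apply Set.Finite.subset (Set.finite_Icc (⌊min p.1 q.1⌋, ⌊min p.2 q.2⌋)
    (⌈max p.1 q.1⌉ - 1, ⌈max p.2 q.2⌉ - 1))
  rintro ⟨k, l⟩ h
  have H := mem_bounds h
  simp only [Set.mem_Icc, Prod.le_def]
  exact ⟨⟨H.1, H.2.2.1⟩, ⟨H.2.1, H.2.2.2⟩⟩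

lemma opp {p q : ℝ × ℝ} {k l k' l' : ℤ} (h1 : (k, l) ∈ VSet p q) (h2 : (k', l') ∈ VSet p q)
    (hk : k < k') :
    (l' < l → (q.1 - p.1) * (q.2 - p.2) < 0) ∧ (l < l' → 0 < (q.1 - p.1) * (q.2 - p.2)) := by
  obtain ⟨u, hus, hut⟩ := h1
  obtain ⟨v, hvs, hvt⟩ := h2
  obtain ⟨t, ht0, ht1, hux, huy⟩ := seg_coord hus
  obtain ⟨s, hs0, hs1, hvx, hvy⟩ := seg_coord hvs
  obtain ⟨⟨hu1, hu2⟩, ⟨hu3, hu4⟩⟩ := hut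
  obtain ⟨⟨hv1, hv2⟩, ⟨hv3, hv4⟩⟩ := hvt
  simp only [mul_one] at hu1 hu2 hu3 hu4 hv1 hv2 hv3 hv4
  have hkk : (k : ℝ) + 1 ≤ (k' : ℝ) := by exact_mod_cast Int.lt_iff_add_one_le.mp hk
  have hxlt : u.1 < v.1 := by linarith
  have hx : 0 < (s - t) * (q.1 - p.1) := by nlinarith
  constructor
  · intro hl
    have hll : (l' : ℝ) + 1 ≤ (l : ℝ) := by exact_mod_cast Int.lt_iff_add_one_le.mp hl
    have hylt : v.2 < u.2 := by linarith
    have hy : (s - t) * (q.2 - p.2) < 0 := by nlinarith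
    nlinarith [mul_pos hx (neg_pos.mpr hy), sq_nonneg (s - t)]
  · intro hl
    have hll : (l : ℝ) + 1 ≤ (l' : ℝ) := by exact_mod_cast Int.lt_iff_add_one_le.mp hl
    have hylt : u.2 < v.2 := by linarith
    have hy : 0 < (s - t) * (q.2 - p.2) := by nlinarith
    nlinarith [mul_pos hx hy, sq_nonneg (s - t)]

set_option maxHeartbeats 1000000 in
lemma lower_bound {L N : ℕ} {p q : ℝ × ℝ} (hL : segLen p q = (L : ℝ))
    (hN : N ≤ visitCount 1 1 p q) (h4 : 4 ≤ N) :
    ((N : ℤ) - 3) ^ 2 + 2 ≤ 2 * (L : ℤ) ^ 2 := by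
  classical
  set x0 := min p.1 q.1 with hx0
  set x1 := max p.1 q.1 with hx1
  set y0 := min p.2 q.2 with hy0
  set y1 := max p.2 q.2 with hy1
  set mx : ℤ := ⌈x1⌉ - ⌊x0⌋ with hmx
  set my : ℤ := ⌈y1⌉ - ⌊y0⌋ with hmy
  have hsum0 : (0:ℝ) ≤ (p.1 - q.1) ^ 2 + (p.2 - q.2) ^ 2 := by positivity
  have hL2 : (x1 - x0) ^ 2 + (y1 - y0) ^ 2 = (L : ℝ) ^ 2 := by
    have hs : segLen p q ^ 2 = (p.1 - q.1) ^ 2 + (p.2 - q.2) ^ 2 := by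
      unfold segLen; exact Real.sq_sqrt hsum0
    rw [hL] at hs
    have h1 : (x1 - x0) ^ 2 = (p.1 - q.1) ^ 2 := by
      rcases le_total p.1 q.1 with h | h
      · rw [hx1, hx0, max_eq_right h, min_eq_left h]; try ring
      · rw [hx1, hx0, max_eq_left h, min_eq_right h]; try ring
    have h2 : (y1 - y0) ^ 2 = (p.2 - q.2) ^ 2 := by
      rcases le_total p.2 q.2 with h | h
      · rw [hy1, hy0, max_eq_right h, min_eq_left h]; try ring
      · rw [hy1, hy0, max_eq_left h, min_eq_right h]; try ring
    rw [h1, h2, ← hs]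
  have hdx0 : (0:ℝ) ≤ x1 - x0 := by
    rw [hx1, hx0]; have := min_le_max (a := p.1) (b := q.1); linarith
  have hdy0 : (0:ℝ) ≤ y1 - y0 := by
    rw [hy1, hy0]; have := min_le_max (a := p.2) (b := q.2); linarith
  have hdx : (mx : ℝ) - 2 < x1 - x0 := by
    have c1 : (⌈x1⌉ : ℝ) < x1 + 1 := Int.ceil_lt_add_one x1
    have c2 : x0 - 1 < (⌊x0⌋ : ℝ) := Int.sub_one_lt_floor x0
    rw [hmx]; push_cast; linarith
  have hdy : (my : ℝ) - 2 < y1 - y0 := by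
    have c1 : (⌈y1⌉ : ℝ) < y1 + 1 := Int.ceil_lt_add_one y1
    have c2 : y0 - 1 < (⌊y0⌋ : ℝ) := Int.sub_one_lt_floor y0
    rw [hmy]; push_cast; linarith
  -- diagonal count
  have hND : (N : ℤ) ≤ mx + my - 1 := by
    set e : ℤ := if 0 ≤ (q.1 - p.1) * (q.2 - p.2) then 1 else -1 with he
    set φ : ℤ × ℤ → ℤ := fun kl => e * kl.1 + kl.2 with hφ
    have key : ∀ k l k' l' : ℤ, (k, l) ∈ VSet p q → (k', l') ∈ VSet p q → k < k' →
        e * k + l ≠ e * k' + l' := by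
      intro k l k' l' h1 h2 hkk heq
      have hO := opp h1 h2 hkk
      by_cases hsgn : 0 ≤ (q.1 - p.1) * (q.2 - p.2)
      · have he1 : e = 1 := by rw [he, if_pos hsgn]
        rw [he1] at heq
        have hl : l' < l := by omega
        exact absurd (hO.1 hl) (not_lt.mpr hsgn)
      · have he1 : e = -1 := by rw [he, if_neg hsgn]
        rw [he1] at heq
        have hl : l < l' := by omega
        have := hO.2 hl
        push_neg at hsgn
        linarith
    have hinj : Set.InjOn φ (VSet p q) := by
      rintro ⟨k, l⟩ h ⟨k', l'⟩ h' heq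
      simp only [hφ] at heq
      rcases lt_trichotomy k k' with h1 | h1 | h1
      · exact absurd heq (key k l k' l' h h' h1)
      · subst h1
        exact Prod.ext_iff.mpr ⟨rfl, add_left_cancel heq⟩
      · exact absurd heq.symm (key k' l' k l h' h h1)
    have he2 : e = 1 ∨ e = -1 := by
      by_cases hsgn : 0 ≤ (q.1 - p.1) * (q.2 - p.2)
      · left; rw [he, if_pos hsgn]
      · right; rw [he, if_neg hsgn]
    have hcard : ∀ lo hi : ℤ, (φ '' VSet p q ⊆ ↑(Finset.Icc lo hi)) →
        (N : ℤ) ≤ hi + 1 - lo := by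
      intro lo hi hsub
      have h1 : (VSet p q).ncard = (φ '' VSet p q).ncard :=
        (Set.ncard_image_of_injOn hinj).symm
      have h2 : (φ '' VSet p q).ncard ≤ (Finset.Icc lo hi).card := by
        rw [← Set.ncard_coe_finset]
        exact Set.ncard_le_ncard hsub (Finset.finite_toSet _)
      have h3 : (Finset.Icc lo hi).card = (hi + 1 - lo).toNat := Int.card_Icc lo hi
      rw [visitCount_eq] at hN
      omega
    rcases he2 with he1 | he1
    · have := hcard (⌊x0⌋ + ⌊y0⌋) ((⌈x1⌉ - 1) + (⌈y1⌉ - 1)) (by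
        rintro x ⟨⟨k, l⟩, hkl, rfl⟩
        have hb := mem_bounds hkl
        rw [← hx0, ← hx1, ← hy0, ← hy1] at hb
        simp only [Finset.coe_Icc, Set.mem_Icc, hφ, he1]
        omega)
      omega
    · have := hcard (-(⌈x1⌉ - 1) + ⌊y0⌋) (-⌊x0⌋ + (⌈y1⌉ - 1)) (by
        rintro x ⟨⟨k, l⟩, hkl, rfl⟩
        have hb := mem_bounds hkl
        rw [← hx0, ← hx1, ← hy0, ← hy1] at hb
        simp only [Finset.coe_Icc, Set.mem_Icc, hφ, he1]
        omega)
      omega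
  -- single column / row counts
  have hcnt : ∀ (ψ : ℤ × ℤ → ℤ) (lo hi : ℤ), Set.InjOn ψ (VSet p q) →
      (ψ '' VSet p q ⊆ ↑(Finset.Icc lo hi)) → (N : ℤ) ≤ hi + 1 - lo := by
    intro ψ lo hi hinj hsub
    have h1 : (VSet p q).ncard = (ψ '' VSet p q).ncard :=
      (Set.ncard_image_of_injOn hinj).symm
    have h2 : (ψ '' VSet p q).ncard ≤ (Finset.Icc lo hi).card := by
      rw [← Set.ncard_coe_finset]
      exact Set.ncard_le_ncard hsub (Finset.finite_toSet _)
    have h3 : (Finset.Icc lo hi).card = (hi + 1 - lo).toNat := Int.card_Icc lo hi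
    rw [visitCount_eq] at hN
    omega
  have hCol : mx ≤ 1 → (N : ℤ) ≤ my := by
    intro hmx1
    have := hcnt (fun kl => kl.2) ⌊y0⌋ (⌈y1⌉ - 1) (by
      rintro ⟨k, l⟩ h ⟨k', l'⟩ h' heq
      simp only at heq
      have b1 := mem_bounds h
      have b2 := mem_bounds h'
      rw [← hx0, ← hx1, ← hy0, ← hy1] at b1 b2
      exact Prod.ext_iff.mpr ⟨by omega, heq⟩)
      (by
      rintro x ⟨⟨k, l⟩, hkl, rfl⟩
      have hb := mem_bounds hkl
      rw [← hx0, ← hx1, ← hy0, ← hy1] at hb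
      simp only [Finset.coe_Icc, Set.mem_Icc]
      omega)
    omega
  have hRow : my ≤ 1 → (N : ℤ) ≤ mx := by
    intro hmy1
    have := hcnt (fun kl => kl.1) ⌊x0⌋ (⌈x1⌉ - 1) (by
      rintro ⟨k, l⟩ h ⟨k', l'⟩ h' heq
      simp only at heq
      have b1 := mem_bounds h
      have b2 := mem_bounds h'
      rw [← hx0, ← hx1, ← hy0, ← hy1] at b1 b2
      exact Prod.ext_iff.mpr ⟨heq, by omega⟩)
      (by
      rintro x ⟨⟨k, l⟩, hkl, rfl⟩
      have hb := mem_bounds hkl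
      rw [← hx0, ← hx1, ← hy0, ← hy1] at hb
      simp only [Finset.coe_Icc, Set.mem_Icc]
      omega)
    omega
  -- final arithmetic
  have hN4 : (4 : ℤ) ≤ (N : ℤ) := by exact_mod_cast h4
  have hNR : (4 : ℝ) ≤ (N : ℝ) := by exact_mod_cast h4
  by_cases hmx1 : mx ≤ 1
  · have hNmy := hCol hmx1
    have hNmyR : (N : ℝ) ≤ (my : ℝ) := by exact_mod_cast hNmy
    have h1 : (N : ℝ) - 2 < y1 - y0 := by linarith
    have h2 : ((N : ℝ) - 2) ^ 2 < (y1 - y0) ^ 2 := sq_lt_sq' (by linarith) h1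
    have h3 : ((N : ℝ) - 2) ^ 2 < (L : ℝ) ^ 2 := by nlinarith [sq_nonneg (x1 - x0)]
    have h5 : ((N : ℤ) - 2) ^ 2 < (L : ℤ) ^ 2 := by exact_mod_cast h3
    nlinarith [h5, hN4, sq_nonneg ((N : ℤ) - 4)]
  · by_cases hmy1 : my ≤ 1
    · have hNmx := hRow hmy1
      have hNmxR : (N : ℝ) ≤ (mx : ℝ) := by exact_mod_cast hNmx
      have h1 : (N : ℝ) - 2 < x1 - x0 := by linarith
      have h2 : ((N : ℝ) - 2) ^ 2 < (x1 - x0) ^ 2 := sq_lt_sq' (by linarith) h1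
      have h3 : ((N : ℝ) - 2) ^ 2 < (L : ℝ) ^ 2 := by nlinarith [sq_nonneg (y1 - y0)]
      have h5 : ((N : ℤ) - 2) ^ 2 < (L : ℤ) ^ 2 := by exact_mod_cast h3
      nlinarith [h5, hN4, sq_nonneg ((N : ℤ) - 4)]
    · have hmx2 : (2 : ℤ) ≤ mx := by omega
      have hmy2 : (2 : ℤ) ≤ my := by omega
      have hmxR : (2 : ℝ) ≤ (mx : ℝ) := by exact_mod_cast hmx2
      have hmyR : (2 : ℝ) ≤ (my : ℝ) := by exact_mod_cast hmy2
      have h1 : ((mx : ℝ) - 2) ^ 2 < (x1 - x0) ^ 2 := sq_lt_sq' (by linarith) hdx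
      have h2 : ((my : ℝ) - 2) ^ 2 < (y1 - y0) ^ 2 := sq_lt_sq' (by linarith) hdy
      have h3 : ((mx : ℝ) - 2) ^ 2 + ((my : ℝ) - 2) ^ 2 < (L : ℝ) ^ 2 := by linarith
      have key1 : (mx - 2) ^ 2 + (my - 2) ^ 2 < (L : ℤ) ^ 2 := by exact_mod_cast h3
      have e1 : (0 : ℤ) ≤ mx + my - 1 - N := by omega
      have e2 : (0 : ℤ) ≤ mx + my - 4 + ((N : ℤ) - 3) := by omega
      nlinarith [key1, sq_nonneg (mx - my), mul_nonneg e1 e2]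

set_option maxHeartbeats 1000000 in
lemma construct (m n : ℕ) (L : ℝ) (hL : 0 < L) (hmn : (m : ℝ) ^ 2 + (n : ℝ) ^ 2 < L ^ 2) :
    ∃ p q : ℝ × ℝ, segLen p q = L ∧ (m + n + 3 : ℕ) ≤ visitCount 1 1 p q := by
  classical
  set ε : ℝ := (L ^ 2 - (m : ℝ) ^ 2 - (n : ℝ) ^ 2) / 2 with hε
  have hε0 : 0 < ε := by rw [hε]; linarith
  set Dx : ℝ := Real.sqrt ((m : ℝ) ^ 2 + ε) with hDx
  set Dy : ℝ := Real.sqrt ((n : ℝ) ^ 2 + ε) with hDy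
  have hDx0 : 0 < Dx := Real.sqrt_pos.mpr (by positivity)
  have hDy0 : 0 < Dy := Real.sqrt_pos.mpr (by positivity)
  have hDxm : (m : ℝ) < Dx := by
    have h := Real.sqrt_lt_sqrt (by positivity : (0:ℝ) ≤ (m:ℝ)^2) (by linarith : (m:ℝ)^2 < (m:ℝ)^2 + ε)
    rwa [Real.sqrt_sq (by positivity : (0:ℝ) ≤ (m:ℝ))] at h
  have hDyn : (n : ℝ) < Dy := by
    have h := Real.sqrt_lt_sqrt (by positivity : (0:ℝ) ≤ (n:ℝ)^2) (by linarith : (n:ℝ)^2 < (n:ℝ)^2 + ε)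
    rwa [Real.sqrt_sq (by positivity : (0:ℝ) ≤ (n:ℝ))] at h
  have hsq : Dx ^ 2 + Dy ^ 2 = L ^ 2 := by
    rw [hDx, hDy, Real.sq_sqrt (by positivity), Real.sq_sqrt (by positivity)]
    rw [hε]; ring
  set α : ℝ := min (1/2) ((Dx - m) / 2) with hα
  have hα0 : 0 < α := lt_min (by norm_num) (by linarith)
  have hα1 : α < 1 := lt_of_le_of_lt (min_le_left _ _) (by norm_num)
  have hαx : (m : ℝ) + α < Dx := by
    have := min_le_right (1/2 : ℝ) ((Dx - m) / 2)
    rw [hα]; linarith [min_le_right (1/2 : ℝ) ((Dx - m) / 2)]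
  set c : ℝ := min (1/2) ((Dy - n) / 2) with hc
  have hc0 : 0 < c := lt_min (by norm_num) (by linarith)
  set Fbad : Finset ℝ := ((Finset.Icc (-1 : ℤ) ((m : ℤ) + n + 2)) ×ˢ
      (Finset.Icc (-1 : ℤ) ((m : ℤ) + n + 2))).image
      (fun kl => Dy * ((kl.1 : ℝ) + α) / Dx - (kl.2 : ℝ)) with hFbad
  obtain ⟨β, hβmem⟩ : ∃ β, β ∈ Set.Ioo (0 : ℝ) c \ ↑Fbad :=
    ((Set.Ioo_infinite hc0).diff (Fbad.finite_toSet)).nonempty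
  obtain ⟨⟨hβ0, hβc⟩, hβF⟩ := hβmem
  have hβ1 : β < 1 := by
    have := min_le_left (1/2 : ℝ) ((Dy - n) / 2)
    rw [hc] at hβc; linarith
  have hβy : (n : ℝ) + β < Dy := by
    have := min_le_right (1/2 : ℝ) ((Dy - n) / 2)
    rw [hc] at hβc; linarith
  set A : ℤ → ℝ := fun k => ((k : ℝ) + α) / Dx with hA
  set B : ℤ → ℝ := fun l => ((l : ℝ) + β) / Dy with hB
  have hAmono : ∀ {k k' : ℤ}, k < k' → A k < A k' := by
    intro k k' h
    have hk : (k : ℝ) < k' := by exact_mod_cast h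
    simp only [hA]
    rw [div_lt_div_iff₀ hDx0 hDx0]
    nlinarith
  have hBmono : ∀ {l l' : ℤ}, l < l' → B l < B l' := by
    intro l l' h
    have hl : (l : ℝ) < l' := by exact_mod_cast h
    simp only [hB]
    rw [div_lt_div_iff₀ hDy0 hDy0]
    nlinarith
  have hne : ∀ k l : ℤ, -1 ≤ k → k ≤ (m : ℤ) + n + 2 → -1 ≤ l → l ≤ (m : ℤ) + n + 2 →
      A k ≠ B l := by
    intro k l hk1 hk2 hl1 hl2 heq
    apply hβF
    rw [Finset.mem_coe, hFbad, Finset.mem_image]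
    refine ⟨(k, l), ?_, ?_⟩
    · rw [Finset.mem_product]
      exact ⟨Finset.mem_Icc.mpr ⟨hk1, hk2⟩, Finset.mem_Icc.mpr ⟨hl1, hl2⟩⟩
    · simp only [hA, hB] at heq
      have hcross : ((k : ℝ) + α) * Dy = ((l : ℝ) + β) * Dx :=
        (div_eq_div_iff hDx0.ne' hDy0.ne').mp heq
      field_simp
      linarith
  set p : ℝ × ℝ := (-α, -β) with hp
  set q : ℝ × ℝ := (Dx - α, Dy - β) with hq
  have hseg : segLen p q = L := by
    show Real.sqrt ((p.1 - q.1) ^ 2 + (p.2 - q.2) ^ 2) = L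
    rw [hp, hq]
    have : ((-α : ℝ) - (Dx - α)) ^ 2 + ((-β : ℝ) - (Dy - β)) ^ 2 = L ^ 2 := by
      rw [← hsq]; ring
    simp only []
    rw [this]
    exact Real.sqrt_sq hL.le
  have htile : ∀ k l : ℤ, -1 ≤ k → -1 ≤ l → A k < 1 → B l < 1 → A k < B (l + 1) →
      B l < A (k + 1) → (k, l) ∈ VSet p q := by
    intro k l hk1 hl1 hA1 hB1 hAB hBA
    have hAk1 : 0 < A (k + 1) := by
      simp only [hA]
      apply div_pos ?_ hDx0
      have : (0 : ℝ) ≤ ((k + 1 : ℤ) : ℝ) := by exact_mod_cast (by omega : (0:ℤ) ≤ k + 1)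
      linarith
    have hBl1 : 0 < B (l + 1) := by
      simp only [hB]
      apply div_pos ?_ hDy0
      have : (0 : ℝ) ≤ ((l + 1 : ℤ) : ℝ) := by exact_mod_cast (by omega : (0:ℤ) ≤ l + 1)
      linarith
    have hAkk : A k < A (k + 1) := hAmono (by omega)
    have hBll : B l < B (l + 1) := hBmono (by omega)
    set lo : ℝ := max (max (A k) (B l)) 0 with hlo
    set hi : ℝ := min (min (A (k + 1)) (B (l + 1))) 1 with hhi
    have hlt : lo < hi := by
      rw [hlo, hhi]
      exact max_lt (max_lt (lt_min (lt_min hAkk hAB) hA1) (lt_min (lt_min hBA hBll) hB1))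
        (lt_min (lt_min hAk1 hBl1) one_pos)
    set t : ℝ := (lo + hi) / 2 with htdef
    have ht_lo : lo < t := by rw [htdef]; linarith
    have ht_hi : t < hi := by rw [htdef]; linarith
    have hlo0 : (0 : ℝ) ≤ lo := le_max_right _ _
    have hhi1 : hi ≤ 1 := min_le_right _ _
    have ht0 : 0 ≤ t := le_of_lt (lt_of_le_of_lt hlo0 ht_lo)
    have ht1 : t ≤ 1 := le_of_lt (lt_of_lt_of_le ht_hi hhi1)
    have eAk : A k < t := lt_of_le_of_lt (le_trans (le_max_left _ _) (le_max_left _ _)) ht_lo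
    have eBl : B l < t := lt_of_le_of_lt (le_trans (le_max_right _ _) (le_max_left _ _)) ht_lo
    have eAk1 : t < A (k + 1) := lt_of_lt_of_le ht_hi (le_trans (min_le_left _ _) (min_le_left _ _))
    have eBl1 : t < B (l + 1) := lt_of_lt_of_le ht_hi (le_trans (min_le_left _ _) (min_le_right _ _))
    have fAk : (k : ℝ) + α < t * Dx := by
      have := eAk; simp only [hA] at this
      exact (div_lt_iff₀ hDx0).mp this
    have fAk1 : t * Dx < (k : ℝ) + 1 + α := by
      have := eAk1; simp only [hA] at this
      have h2 := (lt_div_iff₀ hDx0).mp this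
      push_cast at h2; linarith
    have fBl : (l : ℝ) + β < t * Dy := by
      have := eBl; simp only [hB] at this
      exact (div_lt_iff₀ hDy0).mp this
    have fBl1 : t * Dy < (l : ℝ) + 1 + β := by
      have := eBl1; simp only [hB] at this
      have h2 := (lt_div_iff₀ hDy0).mp this
      push_cast at h2; linarith
    refine ⟨(t * Dx - α, t * Dy - β), ?_, ?_⟩
    · rw [segment_eq_image]
      refine ⟨t, ⟨ht0, ht1⟩, ?_⟩
      rw [hp, hq]
      apply Prod.ext_iff.mpr
      constructor <;> simp <;> ring
    · simp only [tileInt, Set.mem_prod, Set.mem_Ioo, mul_one]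
      exact ⟨⟨by linarith, by linarith⟩, ⟨by linarith, by linarith⟩⟩
  have main : ∀ d : ℤ, -2 ≤ d → d ≤ (m : ℤ) + n →
      ∃ k l : ℤ, k + l = d ∧ -1 ≤ k ∧ -1 ≤ l ∧ A k < 1 ∧ B l < 1 ∧ A k < B (l + 1) ∧
        B l < A (k + 1) := by
    refine Int.le_induction ?_ ?_
    · intro _
      have hAm1 : A (-1) < 0 := by
        simp only [hA]
        apply div_neg_of_neg_of_pos ?_ hDx0
        push_cast; linarith
      have hBm1 : B (-1) < 0 := by
        simp only [hB]
        apply div_neg_of_neg_of_pos ?_ hDy0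
        push_cast; linarith
      have hA0 : 0 < A 0 := by
        simp only [hA]
        apply div_pos ?_ hDx0
        push_cast; linarith
      have hB0 : 0 < B 0 := by
        simp only [hB]
        apply div_pos ?_ hDy0
        push_cast; linarith
      refine ⟨-1, -1, by norm_num, le_refl _, le_refl _, by linarith, by linarith, ?_, ?_⟩
      · have he0 : (-1 : ℤ) + 1 = 0 := by norm_num
        rw [he0]; linarith
      · have he0 : (-1 : ℤ) + 1 = 0 := by norm_num
        rw [he0]; linarith
    · intro d hd ih hdmn
      obtain ⟨k, l, hkl, hk1, hl1, hA1, hB1, hAB, hBA⟩ := ih (by omega)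
      have hkub : k ≤ (m : ℤ) + n + 1 := by omega
      have hlub : l ≤ (m : ℤ) + n + 1 := by omega
      have hne1 : A (k + 1) ≠ B (l + 1) :=
        hne (k + 1) (l + 1) (by omega) (by omega) (by omega) (by omega)
      have hAx : k + 1 ≤ (m : ℤ) → A (k + 1) < 1 := by
        intro h
        simp only [hA]
        rw [div_lt_one hDx0]
        have : ((k + 1 : ℤ) : ℝ) ≤ (m : ℝ) := by exact_mod_cast h
        linarith
      have hBy : l + 1 ≤ (n : ℤ) → B (l + 1) < 1 := by
        intro h
        simp only [hB]
        rw [div_lt_one hDy0]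
        have : ((l + 1 : ℤ) : ℝ) ≤ (n : ℝ) := by exact_mod_cast h
        linarith
      rcases lt_or_gt_of_ne hne1 with hcase | hcase
      · refine ⟨k + 1, l, by omega, by omega, hl1, ?_, hB1, hcase, ?_⟩
        · by_cases hkm : k + 1 ≤ (m : ℤ)
          · exact hAx hkm
          · have hln : l + 1 ≤ (n : ℤ) := by omega
            exact lt_trans hcase (hBy hln)
        · exact lt_trans hBA (hAmono (by omega))
      · refine ⟨k, l + 1, by omega, hk1, by omega, hA1, ?_, ?_, hcase⟩
        · by_cases hln : l + 1 ≤ (n : ℤ)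
          · exact hBy hln
          · have hkm : k + 1 ≤ (m : ℤ) := by omega
            exact lt_trans hcase (hAx hkm)
        · exact lt_trans hAB (hBmono (by omega))
  have hchoice : ∀ d : ℤ, ∃ kl : ℤ × ℤ, -2 ≤ d → d ≤ (m : ℤ) + n →
      kl ∈ VSet p q ∧ kl.1 + kl.2 = d := by
    intro d
    by_cases hd : -2 ≤ d ∧ d ≤ (m : ℤ) + n
    · obtain ⟨k, l, hkl, hk1, hl1, hA1, hB1, hAB, hBA⟩ := main d hd.1 hd.2
      exact ⟨(k, l), fun _ _ => ⟨htile k l hk1 hl1 hA1 hB1 hAB hBA, hkl⟩⟩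
    · exact ⟨(0, 0), fun h1 h2 => absurd ⟨h1, h2⟩ hd⟩
  choose g hg using hchoice
  have hmaps : Set.MapsTo g (Set.Icc (-2 : ℤ) ((m : ℤ) + n)) (VSet p q) :=
    fun d hd => (hg d hd.1 hd.2).1
  have hinj : Set.InjOn g (Set.Icc (-2 : ℤ) ((m : ℤ) + n)) := by
    intro d1 h1 d2 h2 heq
    have e1 := (hg d1 h1.1 h1.2).2
    have e2 := (hg d2 h2.1 h2.2).2
    rw [heq] at e1
    omega
  have hcard : (Set.Icc (-2 : ℤ) ((m : ℤ) + n)).ncard ≤ (VSet p q).ncard :=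
    Set.ncard_le_ncard_of_injOn g hmaps hinj (VSet_finite p q)
  have hicc : (Set.Icc (-2 : ℤ) ((m : ℤ) + n)).ncard = m + n + 3 := by
    rw [← Finset.coe_Icc, Set.ncard_coe_finset, Int.card_Icc]
    omega
  refine ⟨p, q, hseg, ?_⟩
  rw [visitCount_eq]
  omega

theorem stmt_15 (N : ℕ) (hN : 1 ≤ N) :
    (N ≤ 3 → minIntLen N = 1) ∧
    (4 ≤ N → (minIntLen N : ℤ) = ⌈Real.sqrt (((N : ℝ) - 3) ^ 2 / 2 + 1)⌉) := by
  constructor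
  · intro h3
    obtain ⟨p, q, hpq, hvc⟩ := construct 0 0 1 one_pos (by norm_num)
    have h1mem : 1 ∈ {L : ℕ | 1 ≤ L ∧ ∃ p q : ℝ × ℝ, segLen p q = (L : ℝ) ∧
        N ≤ visitCount 1 1 p q} :=
      ⟨le_refl 1, p, q, by exact_mod_cast hpq, le_trans (by omega) hvc⟩
    have hle := Nat.sInf_le h1mem
    have hmem := Nat.sInf_mem (⟨1, h1mem⟩ : Set.Nonempty _)
    have h1 := hmem.1
    unfold minIntLen
    omega
  · intro h4
    set S : Set ℕ := {L : ℕ | 1 ≤ L ∧ ∃ p q : ℝ × ℝ, segLen p q = (L : ℝ) ∧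
        N ≤ visitCount 1 1 p q} with hS
    have hSdef : minIntLen N = sInf S := rfl
    set s : ℕ := N - 3 with hs
    have hsN : (s : ℝ) = (N : ℝ) - 3 := by
      have h : (s : ℤ) = (N : ℤ) - 3 := by omega
      exact_mod_cast h
    set r : ℝ := Real.sqrt (((N : ℝ) - 3) ^ 2 / 2 + 1) with hr
    have harg0 : (0:ℝ) ≤ ((N : ℝ) - 3) ^ 2 / 2 + 1 := by positivity
    have hr1 : (1:ℝ) ≤ r := by
      have h1 : Real.sqrt 1 ≤ r := Real.sqrt_le_sqrt (by nlinarith [sq_nonneg ((N:ℝ) - 3)])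
      rwa [Real.sqrt_one] at h1
    have hr0 : (0:ℝ) ≤ r := by linarith
    set L0 : ℤ := ⌈r⌉ with hL0
    have hL01 : 1 ≤ L0 := by
      have h1 := Int.le_ceil r
      have h2 : (1:ℝ) ≤ ((L0 : ℤ) : ℝ) := le_trans hr1 h1
      exact_mod_cast h2
    have hL0sq : ((N:ℝ) - 3) ^ 2 / 2 + 1 ≤ ((L0 : ℤ) : ℝ) ^ 2 := by
      have h1 : r ≤ ((L0 : ℤ) : ℝ) := Int.le_ceil r
      have h2 : r ^ 2 ≤ ((L0 : ℤ) : ℝ) ^ 2 := pow_le_pow_left₀ hr0 h1 2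
      rw [hr, Real.sq_sqrt harg0] at h2
      exact h2
    set m : ℕ := (s + 1) / 2 with hm
    set n : ℕ := s / 2 with hn
    have hmn : m + n = s := by omega
    have hle1 : n ≤ m := by omega
    have hle2 : m ≤ n + 1 := by omega
    have hsum : 2 * ((m:ℤ) ^ 2 + (n:ℤ) ^ 2) ≤ (s:ℤ) ^ 2 + 1 := by
      have h1 : (m:ℤ) + n = s := by exact_mod_cast hmn
      have h2 : (n:ℤ) ≤ m := by exact_mod_cast hle1
      have h3 : (m:ℤ) ≤ n + 1 := by exact_mod_cast hle2
      nlinarith [h1, h2, h3]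
    have hL0nat : ((L0.toNat : ℤ)) = L0 := Int.toNat_of_nonneg (by omega)
    have hL0natpos : 1 ≤ L0.toNat := by omega
    have hmem : L0.toNat ∈ S := by
      have hL0R : ((L0.toNat : ℕ) : ℝ) = ((L0 : ℤ) : ℝ) := by exact_mod_cast hL0nat
      have hA : 2 * ((m:ℝ) ^ 2 + (n:ℝ) ^ 2) ≤ (s:ℝ) ^ 2 + 1 := by exact_mod_cast hsum
      have hlt : (m:ℝ) ^ 2 + (n:ℝ) ^ 2 < ((L0.toNat : ℕ) : ℝ) ^ 2 := by
        rw [hL0R]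
        nlinarith [hL0sq, hA, hsN]
      obtain ⟨p, q, hpq, hvc⟩ := construct m n ((L0.toNat : ℕ) : ℝ)
        (by exact_mod_cast Nat.lt_of_lt_of_le Nat.zero_lt_one hL0natpos) hlt
      exact ⟨hL0natpos, p, q, hpq, by omega⟩
    have hlb : ∀ K ∈ S, L0.toNat ≤ K := by
      intro K hK
      obtain ⟨hK1, p, q, hpq, hvc⟩ := hK
      have hKZ := lower_bound hpq hvc h4
      have hKR : r ≤ ((K:ℕ) : ℝ) := by
        have hc : ((N:ℝ) - 3) ^ 2 + 2 ≤ 2 * ((K:ℕ) : ℝ) ^ 2 := by exact_mod_cast hKZ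
        have harg : ((N:ℝ) - 3) ^ 2 / 2 + 1 ≤ ((K:ℕ) : ℝ) ^ 2 := by linarith
        calc r ≤ Real.sqrt (((K:ℕ) : ℝ) ^ 2) := Real.sqrt_le_sqrt harg
        _ = ((K:ℕ) : ℝ) := Real.sqrt_sq (by positivity)
      have hLK : L0 ≤ ((K:ℕ) : ℤ) := Int.ceil_le.mpr (by exact_mod_cast hKR)
      omega
    have hfin : minIntLen N = L0.toNat := by
      rw [hSdef]
      exact le_antisymm (Nat.sInf_le hmem) (hlb _ (Nat.sInf_mem ⟨_, hmem⟩))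
    rw [hfin, hL0nat]
end

section
/- For the unit square grid (a = b = 1) and every integer N ≥ 1, the minimum integer length λ(N) = min{L ∈ ℕ, L ≥ 1 : some segment of length L visits at least N tiles} satisfies λ(N) = ⌊L(N)⌋ + 1, where L(N) is the infimum of real lengths ℓ > 0 of segments visiting at least N tiles. -/
open Set

namespace Aux

noncomputable def γ (p q : ℝ × ℝ) (t : ℝ) : ℝ × ℝ := p + t • (q - p)

lemma segment_eq (p q : ℝ × ℝ) : segment ℝ p q = γ p q '' Icc 0 1 :=
  segment_eq_image' ℝ p q

lemma gamma_fst (p q : ℝ × ℝ) (t : ℝ) : (γ p q t).1 = p.1 + t * (q.1 - p.1) := rfl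
lemma gamma_snd (p q : ℝ × ℝ) (t : ℝ) : (γ p q t).2 = p.2 + t * (q.2 - p.2) := rfl

lemma segLen_gamma (p q : ℝ × ℝ) (s t : ℝ) :
    segLen (γ p q s) (γ p q t) = |s - t| * segLen p q := by
  unfold segLen
  have h : ((γ p q s).1 - (γ p q t).1) ^ 2 + ((γ p q s).2 - (γ p q t).2) ^ 2
      = (s - t) ^ 2 * ((p.1 - q.1) ^ 2 + (p.2 - q.2) ^ 2) := by
    rw [gamma_fst, gamma_fst, gamma_snd, gamma_snd]; ring
  rw [h, Real.sqrt_mul (sq_nonneg _), Real.sqrt_sq_eq_abs]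

lemma gamma_zero (p q : ℝ × ℝ) : γ p q 0 = p := by simp [γ]

lemma gamma_mem_sub (p q : ℝ × ℝ) {u c : ℝ} (hu : 0 ≤ u) (huc : u ≤ c) :
    γ p q u ∈ segment ℝ p (γ p q c) := by
  rcases eq_or_lt_of_le (hu.trans huc) with hc | hc
  · have hu0 : u = 0 := le_antisymm (huc.trans hc.symm.le) hu
    rw [hu0, gamma_zero]; exact left_mem_segment ℝ p _
  · rw [segment_eq_image']
    refine ⟨u / c, ⟨div_nonneg hu hc.le, (div_le_one hc).mpr huc⟩, ?_⟩
    show p + (u / c) • (γ p q c - p) = γ p q u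
    unfold γ
    rw [add_sub_cancel_left, smul_smul, div_mul_cancel₀ _ hc.ne']

lemma segment_subset_ext (p q : ℝ × ℝ) {c : ℝ} (hc : 1 ≤ c) :
    segment ℝ p q ⊆ segment ℝ p (γ p q c) := by
  rw [segment_eq, segment_eq_image']
  rintro x ⟨s, hs, rfl⟩
  have hc0 : (0:ℝ) < c := lt_of_lt_of_le one_pos hc
  refine ⟨s / c, ⟨div_nonneg hs.1 hc0.le, (div_le_one hc0).mpr (hs.2.trans hc)⟩, ?_⟩
  show p + (s / c) • (γ p q c - p) = γ p q s
  unfold γ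
  rw [add_sub_cancel_left, smul_smul, div_mul_cancel₀ _ hc0.ne']

lemma coord_bound {a b t : ℝ} (h0 : 0 ≤ t) (h1 : t ≤ 1) :
    min a b ≤ a + t * (b - a) ∧ a + t * (b - a) ≤ max a b := by
  rcases le_total a b with h | h
  · rw [min_eq_left h, max_eq_right h]; constructor <;> nlinarith
  · rw [min_eq_right h, max_eq_left h]; constructor <;> nlinarith

lemma seg_coord {p q x : ℝ × ℝ} (hx : x ∈ segment ℝ p q) :
    min p.1 q.1 ≤ x.1 ∧ x.1 ≤ max p.1 q.1 ∧ min p.2 q.2 ≤ x.2 ∧ x.2 ≤ max p.2 q.2 := by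
  rw [segment_eq] at hx
  obtain ⟨t, ⟨ht0, ht1⟩, rfl⟩ := hx
  rw [gamma_fst, gamma_snd]
  obtain ⟨h1, h2⟩ := coord_bound (a := p.1) (b := q.1) ht0 ht1
  obtain ⟨h3, h4⟩ := coord_bound (a := p.2) (b := q.2) ht0 ht1
  exact ⟨h1, h2, h3, h4⟩

lemma visited_finite (p q : ℝ × ℝ) :
    {kl : ℤ × ℤ | (segment ℝ p q ∩ tileInt 1 1 kl.1 kl.2).Nonempty}.Finite := by
  apply Set.Finite.subset (Set.finite_Icc (⌊min p.1 q.1⌋ - 1, ⌊min p.2 q.2⌋ - 1)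
    (⌈max p.1 q.1⌉, ⌈max p.2 q.2⌉))
  rintro ⟨k, l⟩ ⟨x, hx1, hx2⟩
  obtain ⟨hc1, hc2, hc3, hc4⟩ := seg_coord hx1
  obtain ⟨⟨ht1, ht2⟩, ht3, ht4⟩ := hx2
  simp only [mul_one] at ht1 ht2 ht3 ht4
  simp only [Set.mem_Icc, Prod.mk_le_mk]
  have f1 : (⌊min p.1 q.1⌋ : ℝ) ≤ min p.1 q.1 := Int.floor_le _
  have f2 : (⌊min p.2 q.2⌋ : ℝ) ≤ min p.2 q.2 := Int.floor_le _
  have c1 : max p.1 q.1 ≤ (⌈max p.1 q.1⌉ : ℝ) := Int.le_ceil _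
  have c2 : max p.2 q.2 ≤ (⌈max p.2 q.2⌉ : ℝ) := Int.le_ceil _
  constructor
  · constructor
    · have : (⌊min p.1 q.1⌋ : ℝ) < (k : ℝ) + 1 := by linarith
      have := Int.lt_iff_add_one_le.mp (by exact_mod_cast this)
      omega
    · have : (⌊min p.2 q.2⌋ : ℝ) < (l : ℝ) + 1 := by linarith
      have := Int.lt_iff_add_one_le.mp (by exact_mod_cast this)
      omega
  · constructor
    · have : (k : ℝ) < (⌈max p.1 q.1⌉ : ℝ) := by linarith
      exact (Int.cast_lt.mp this).le
    · have : (l : ℝ) < (⌈max p.2 q.2⌉ : ℝ) := by linarith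
      exact (Int.cast_lt.mp this).le

lemma visit_mono {p q p' q' : ℝ × ℝ} (h : segment ℝ p q ⊆ segment ℝ p' q') :
    visitCount 1 1 p q ≤ visitCount 1 1 p' q' := by
  apply Set.ncard_le_ncard _ (visited_finite p' q')
  rintro kl ⟨x, hx1, hx2⟩
  exact ⟨x, h hx1, hx2⟩

lemma exists_ext {p q : ℝ × ℝ} {L : ℝ} (hl : 0 < segLen p q) (hL : segLen p q ≤ L) :
    ∃ q', segLen p q' = L ∧ visitCount 1 1 p q ≤ visitCount 1 1 p q' := by
  refine ⟨γ p q (L / segLen p q), ?_, ?_⟩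
  · have h := segLen_gamma p q 0 (L / segLen p q)
    rw [gamma_zero] at h
    rw [h, zero_sub, abs_neg, abs_of_nonneg (div_nonneg (le_trans hl.le hL) hl.le),
      div_mul_cancel₀ _ hl.ne']
  · exact visit_mono (segment_subset_ext p q ((one_le_div hl).mpr hL))


lemma exists_seg (N : ℕ) (hN : 1 ≤ N) :
    ∃ p q : ℝ × ℝ, segLen p q = (N : ℝ) ∧ N ≤ visitCount 1 1 p q := by
  have hN0 : (0:ℝ) < N := by exact_mod_cast hN
  refine ⟨(1/2, 1/2), ((N : ℝ) + 1/2, 1/2), ?_, ?_⟩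
  · unfold segLen
    have : ((1:ℝ)/2 - ((N:ℝ) + 1/2)) ^ 2 + ((1:ℝ)/2 - 1/2) ^ 2 = (N:ℝ) ^ 2 := by ring
    rw [show (((1:ℝ)/2, (1:ℝ)/2) : ℝ × ℝ).1 = 1/2 from rfl]
    simp only []
    rw [this]  -- may fail; adjust
    exact Real.sqrt_sq hN0.le
  · set p : ℝ × ℝ := (1/2, 1/2)
    set q : ℝ × ℝ := ((N : ℝ) + 1/2, 1/2)
    have hsub : (fun k : ℕ => ((k : ℤ), (0 : ℤ))) '' (Set.Iio N) ⊆
        {kl : ℤ × ℤ | (segment ℝ p q ∩ tileInt 1 1 kl.1 kl.2).Nonempty} := by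
      rintro _ ⟨k, hk, rfl⟩
      refine ⟨((k : ℝ) + 1/2, 1/2), ?_, ?_⟩
      · rw [segment_eq]
        refine ⟨(k : ℝ) / (N : ℝ), ⟨div_nonneg (by positivity) hN0.le,
          (div_le_one hN0).mpr (by exact_mod_cast hk.le)⟩, ?_⟩
        have : γ p q ((k:ℝ)/(N:ℝ)) = (1/2 + (k:ℝ)/(N:ℝ) * ((N:ℝ) + 1/2 - 1/2), 1/2 + (k:ℝ)/(N:ℝ) * (1/2 - 1/2)) := rfl
        rw [this]
        have hx : (1:ℝ)/2 + (k:ℝ)/(N:ℝ) * ((N:ℝ) + 1/2 - 1/2) = (k:ℝ) + 1/2 := by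
          field_simp
          ring
        rw [hx]
        norm_num
      · constructor
        · constructor <;> simp <;> norm_num
        · constructor <;> norm_num
    have hinj : Function.Injective (fun k : ℕ => ((k : ℤ), (0 : ℤ))) := by
      intro a b h
      simpa using h
    have himg : ((fun k : ℕ => ((k : ℤ), (0 : ℤ))) '' (Set.Iio N)).ncard = N := by
      rw [Set.ncard_image_of_injective _ hinj, ← Finset.coe_range,
        Set.ncard_coe_finset, Finset.card_range]
    have hle := Set.ncard_le_ncard hsub (visited_finite p q)
    rw [himg] at hle
    exact hle


lemma exists_shorter {N : ℕ} (hN : 1 ≤ N) {p q : ℝ × ℝ} (hl : 0 < segLen p q)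
    (hv : N ≤ visitCount 1 1 p q) :
    ∃ ℓ', 0 < ℓ' ∧ ℓ' < segLen p q ∧
      ∃ p' q' : ℝ × ℝ, segLen p' q' = ℓ' ∧ N ≤ visitCount 1 1 p' q' := by
  set T := {kl : ℤ × ℤ | (segment ℝ p q ∩ tileInt 1 1 kl.1 kl.2).Nonempty} with hT
  have hTfin := visited_finite p q
  have hTcard : N ≤ T.ncard := hv
  have hTne : T.Nonempty := by
    rcases T.eq_empty_or_nonempty with h | h
    · exfalso; rw [h, Set.ncard_empty] at hTcard; omega
    · exact h
  have key : ∀ kl : ℤ × ℤ, ∃ t, t ∈ Ioo (0:ℝ) 1 ∧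
      (kl ∈ T → γ p q t ∈ tileInt 1 1 kl.1 kl.2) := by
    intro kl
    by_cases h : kl ∈ T
    · obtain ⟨x, hx1, hx2⟩ := h
      rw [segment_eq] at hx1
      obtain ⟨t₀, ht₀, rfl⟩ := hx1
      have hopen : IsOpen (tileInt 1 1 kl.1 kl.2) := isOpen_Ioo.prod isOpen_Ioo
      have hcont : Continuous (γ p q) := by
        unfold γ; fun_prop
      have hVopen : IsOpen ((γ p q) ⁻¹' tileInt 1 1 kl.1 kl.2) := hopen.preimage hcont
      have hcl : t₀ ∈ closure (Ioo (0:ℝ) 1) := by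
        rw [closure_Ioo one_ne_zero.symm]; exact ht₀
      have hmem : t₀ ∈ (γ p q) ⁻¹' tileInt 1 1 kl.1 kl.2 := hx2
      obtain ⟨t, htV, htIoo⟩ := (mem_closure_iff.mp hcl) _ hVopen hmem
      exact ⟨t, htIoo, fun _ => htV⟩
    · exact ⟨1/2, by norm_num, fun hk => absurd hk h⟩
  choose f hf1 hf2 using key
  set s := hTfin.toFinset with hs
  have hsne : s.Nonempty := by rwa [Set.Finite.toFinset_nonempty]
  set ε := s.inf' hsne (fun kl => min (f kl) (1 - f kl)) with hε
  have hεpos : 0 < ε := by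
    rw [hε, Finset.lt_inf'_iff]
    intro kl _
    exact lt_min (hf1 kl).1 (by linarith [(hf1 kl).2])
  obtain ⟨kl₀, hkl₀⟩ := hsne
  have hεle : ε ≤ 1 - f kl₀ :=
    le_trans (Finset.inf'_le _ hkl₀) (min_le_right _ _)
  have hεlt1 : ε < 1 := by linarith [(hf1 kl₀).1]
  set c := 1 - ε / 2 with hc
  have hc0 : 0 < c := by rw [hc]; linarith
  have hc1 : c < 1 := by rw [hc]; linarith
  refine ⟨c * segLen p q, by positivity, by nlinarith, p, γ p q c, ?_, ?_⟩
  · have h := segLen_gamma p q 0 c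
    rw [gamma_zero] at h
    rw [h, zero_sub, abs_neg, abs_of_nonneg hc0.le]
  · refine le_trans hTcard (Set.ncard_le_ncard ?_ (visited_finite _ _))
    intro kl hkl
    refine ⟨γ p q (f kl), ?_, hf2 kl hkl⟩
    apply gamma_mem_sub p q (hf1 kl).1.le
    have : ε ≤ 1 - f kl :=
      le_trans (Finset.inf'_le _ (by rwa [hs, Set.Finite.mem_toFinset])) (min_le_right _ _)
    rw [hc]; linarith

end Aux

open Aux in
theorem stmt_16 (N : ℕ) (hN : 1 ≤ N) :
    (minIntLen N : ℤ) = ⌊infLen 1 1 N⌋ + 1 := by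
  set A := {ℓ : ℝ | 0 < ℓ ∧ ∃ p q : ℝ × ℝ, segLen p q = ℓ ∧ N ≤ visitCount 1 1 p q} with hA
  set B := {L : ℕ | 1 ≤ L ∧ ∃ p q : ℝ × ℝ, segLen p q = (L : ℝ) ∧ N ≤ visitCount 1 1 p q} with hB
  have hinfA : infLen 1 1 N = sInf A := rfl
  have hminB : minIntLen N = sInf B := rfl
  have hN0 : (0:ℝ) < N := by exact_mod_cast hN
  obtain ⟨p₀, q₀, hseg₀, hvis₀⟩ := exists_seg N hN
  have hBne : B.Nonempty := ⟨N, hN, p₀, q₀, hseg₀, hvis₀⟩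
  have hAne : A.Nonempty := ⟨(N : ℝ), hN0, p₀, q₀, hseg₀, hvis₀⟩
  have hAbdd : BddBelow A := ⟨0, fun ℓ hℓ => hℓ.1.le⟩
  have hAnonneg : 0 ≤ sInf A := Real.sInf_nonneg (fun ℓ hℓ => hℓ.1.le)
  -- the minimum integer length, as an element of B
  have hm : minIntLen N ∈ B := by rw [hminB]; exact Nat.sInf_mem hBne
  obtain ⟨hm1, p, q, hpq, hvc⟩ := hm
  have hm0 : (0:ℝ) < (minIntLen N : ℝ) := by exact_mod_cast hm1
  have hppos : 0 < segLen p q := by rw [hpq]; exact hm0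
  -- strict inequality: sInf A < minIntLen N
  obtain ⟨ℓ', hℓ'pos, hℓ'lt, p', q', h1, h2⟩ := exists_shorter hN hppos hvc
  have hℓ'A : ℓ' ∈ A := ⟨hℓ'pos, p', q', h1, h2⟩
  have hlt : sInf A < (minIntLen N : ℝ) :=
    lt_of_le_of_lt (csInf_le hAbdd hℓ'A) (by rw [← hpq]; exact hℓ'lt)
  -- lower bound: ⌊sInf A⌋ + 1 ≤ minIntLen N
  have hge : ⌊infLen 1 1 N⌋ + 1 ≤ (minIntLen N : ℤ) := by
    have h1 : (⌊infLen 1 1 N⌋ : ℝ) < ((minIntLen N : ℤ) : ℝ) := by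
      push_cast
      exact lt_of_le_of_lt (Int.floor_le _) (by rw [hinfA]; exact hlt)
    have := Int.cast_lt.mp h1
    omega
  -- upper bound
  have hle : (minIntLen N : ℤ) ≤ ⌊infLen 1 1 N⌋ + 1 := by
    set L : ℤ := ⌊infLen 1 1 N⌋ + 1 with hL
    have hfl0 : 0 ≤ ⌊infLen 1 1 N⌋ := Int.floor_nonneg.mpr (by rw [hinfA]; exact hAnonneg)
    have hL1 : 1 ≤ L := by omega
    have hLgt : sInf A < (L : ℝ) := by
      rw [← hinfA]
      push_cast [hL]
      exact Int.lt_floor_add_one _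
    obtain ⟨ℓ, hℓA, hℓlt⟩ := exists_lt_of_csInf_lt hAne hLgt
    obtain ⟨hℓpos, pp, qq, hpq', hv'⟩ := hℓA
    have hlen0 : 0 < segLen pp qq := by rw [hpq']; exact hℓpos
    have hlenle : segLen pp qq ≤ (L : ℝ) := by rw [hpq']; exact hℓlt.le
    obtain ⟨q'', hq''len, hq''v⟩ := exists_ext hlen0 hlenle
    have hLt : ((L.toNat : ℕ) : ℝ) = (L : ℝ) := by
      have h2 : (L.toNat : ℤ) = L := Int.toNat_of_nonneg (by omega)
      exact_mod_cast congrArg (Int.cast : ℤ → ℝ) h2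
    have hBm : L.toNat ∈ B := ⟨by omega, pp, q'', by rw [hq''len, hLt], le_trans hv' hq''v⟩
    have := Nat.sInf_le hBm
    rw [← hminB] at this
    omega
  omega
end
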